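/- arXiv:1412.4719 — 3 statements merged into one kernel-verified Lean document; each statement's English description precedes it below -/
import Mathlib

section
/- Let p be prime and let f₁,…,f_r : (ZMod p)^n → ℝ/ℤ be nonclassical polynomials of degree d with values on {0,1}^n in (1/p^k)ℤ/ℤ, all vanishing at 0^n. If n > (p^k − 1)·d·r, then there exists a nonzero x ∈ {0,1}^n with f₁(x) = ⋯ = f_r(x) = 0. -/
open Finset

/-- Additive directional derivative `D_h f(x) = f(x+h) - f(x)`. -/
noncomputable def D {V M : Type*} [Add V] [AddCommGroup M] (h : V) (f : V → M) : V → M :=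
  fun x => f (x + h) - f x

/-- `f` is a nonclassical polynomial of degree at most `d`:
all `(d+1)`-fold iterated derivatives vanish identically. -/
def IsNCPoly {V M : Type*} [Add V] [AddCommGroup M] (d : ℕ) (f : V → M) : Prop :=
  ∀ hs : List V, hs.length = d + 1 → hs.foldr D f = 0

/-- `e(t) = exp(2πit)` on the torus `ℝ/ℤ`. -/
noncomputable def e : AddCircle (1 : ℝ) → ℂ :=
  Function.Periodic.lift (f := fun t : ℝ => Complex.exp (2 * (Real.pi : ℂ) * Complex.I * (t : ℂ)))
    (by
      intro t
      dsimp only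
      rw [Complex.ofReal_add, Complex.ofReal_one, mul_add, mul_one, Complex.exp_add,
        Complex.exp_two_pi_mul_I, mul_one])

/-- `x` is a Boolean point: all coordinates are `0` or `1`. -/
def IsBool {n : ℕ} {R : Type*} [Zero R] [One R] (x : Fin n → R) : Prop :=
  ∀ i, x i = 0 ∨ x i = 1

set_option linter.unusedSectionVars false


open Finset

namespace Stmt15Aux

variable {α : Type*} [DecidableEq α] {M : Type*} [AddCommGroup M]

/-- Möbius coefficient of a cube function. -/
def mu (G : Finset α → M) (T : Finset α) : M :=
  ∑ U ∈ T.powerset, ((-1 : ℤ) ^ (#T + #U)) • G U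

lemma alt_filter {C T : Finset α} (hC : C ⊆ T) :
    (∑ U ∈ T.powerset.filter (fun U => C ⊆ U), (-1 : ℤ) ^ #U)
      = if T = C then (-1 : ℤ) ^ #C else 0 := by
  have himg : T.powerset.filter (fun U => C ⊆ U)
      = (T \ C).powerset.image (fun W => C ∪ W) := by
    ext U
    simp only [mem_filter, mem_powerset, mem_image]
    constructor
    · rintro ⟨hUT, hCU⟩
      exact ⟨U \ C, sdiff_subset_sdiff hUT le_rfl, by rw [union_sdiff_of_subset hCU]⟩
    · rintro ⟨W, hW, rfl⟩
      refine ⟨union_subset hC (hW.trans sdiff_subset), subset_union_left⟩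
  rw [himg, Finset.sum_image]
  · have hcard : ∀ W ∈ (T \ C).powerset, (-1 : ℤ) ^ #(C ∪ W) = (-1 : ℤ) ^ #C * (-1 : ℤ) ^ #W := by
      intro W hW
      rw [mem_powerset] at hW
      have hdisj : Disjoint C W := (disjoint_sdiff.mono_right hW)
      rw [card_union_of_disjoint hdisj, pow_add]
    rw [Finset.sum_congr rfl hcard, ← Finset.mul_sum, sum_powerset_neg_one_pow_card]
    by_cases h : T = C
    · simp [h]
    · have : T \ C ≠ ∅ := by
        intro he
        exact h (Finset.Subset.antisymm (by rw [← sdiff_eq_empty_iff_subset] at *; exact he) hC)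
      simp [this, h]
  · intro W₁ h₁ W₂ h₂ hEq
    rw [mem_coe, mem_powerset] at h₁ h₂
    have d₁ : Disjoint C W₁ := disjoint_sdiff.mono_right h₁
    have d₂ : Disjoint C W₂ := disjoint_sdiff.mono_right h₂
    have := congrArg (fun U => U \ C) hEq
    simpa [union_sdiff_cancel_left d₁, union_sdiff_cancel_left d₂] using this

lemma swap_powerset {S : Finset α} (F : Finset α → Finset α → M) :
    ∑ T ∈ S.powerset, ∑ U ∈ T.powerset, F T U
      = ∑ U ∈ S.powerset, ∑ T ∈ S.powerset.filter (fun T => U ⊆ T), F T U := by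
  have h : ∀ T ∈ S.powerset, ∑ U ∈ T.powerset, F T U
      = ∑ U ∈ S.powerset, if U ⊆ T then F T U else 0 := by
    intro T hT
    calc ∑ U ∈ T.powerset, F T U
        = ∑ U ∈ T.powerset, (if U ⊆ T then F T U else 0) :=
          Finset.sum_congr rfl fun U hU => (if_pos (Finset.mem_powerset.1 hU)).symm
      _ = ∑ U ∈ S.powerset, (if U ⊆ T then F T U else 0) :=
          Finset.sum_subset (Finset.powerset_mono.2 (Finset.mem_powerset.1 hT))
            (fun U _ hU => if_neg (fun h => hU (Finset.mem_powerset.2 h)))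
  rw [Finset.sum_congr rfl h, Finset.sum_comm]
  exact Finset.sum_congr rfl fun U _ => (Finset.sum_filter _ _).symm

lemma sum_mu (G : Finset α → M) (S : Finset α) :
    ∑ T ∈ S.powerset, mu G T = G S := by
  unfold mu
  rw [swap_powerset]
  have h : ∀ U ∈ S.powerset,
      (∑ T ∈ S.powerset.filter (fun T => U ⊆ T), ((-1 : ℤ) ^ (#T + #U)) • G U)
        = if S = U then G U else 0 := by
    intro U hU
    rw [← Finset.sum_smul]
    have : (∑ T ∈ S.powerset.filter (fun T => U ⊆ T), (-1 : ℤ) ^ (#T + #U))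
        = if S = U then 1 else 0 := by
      have : (∑ T ∈ S.powerset.filter (fun T => U ⊆ T), (-1 : ℤ) ^ (#T + #U))
          = (∑ T ∈ S.powerset.filter (fun T => U ⊆ T), (-1 : ℤ) ^ #T) * (-1 : ℤ) ^ #U := by
        rw [Finset.sum_mul]
        exact Finset.sum_congr rfl fun T _ => (pow_add _ _ _)
      rw [this, alt_filter (Finset.mem_powerset.1 hU)]
      by_cases h : S = U
      · subst h; simp [← pow_add, ← two_mul]
      · simp [h]
    rw [this]
    by_cases h : S = U <;> simp [h]
  rw [Finset.sum_congr rfl h, Finset.sum_ite_eq]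
  simp

lemma mu_eq_coeff {G : Finset α → M} {a : Finset α → M}
    (h : ∀ S, G S = ∑ C ∈ S.powerset, a C) (T : Finset α) : mu G T = a T := by
  unfold mu
  have h1 : ∀ U ∈ T.powerset, ((-1 : ℤ) ^ (#T + #U)) • G U
      = ∑ C ∈ T.powerset, if C ⊆ U then ((-1 : ℤ) ^ (#T + #U)) • a C else 0 := by
    intro U hU
    rw [h U, Finset.smul_sum]
    calc ∑ C ∈ U.powerset, ((-1 : ℤ) ^ (#T + #U)) • a C
        = ∑ C ∈ U.powerset, (if C ⊆ U then ((-1 : ℤ) ^ (#T + #U)) • a C else 0) :=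
          Finset.sum_congr rfl fun C hC => (if_pos (Finset.mem_powerset.1 hC)).symm
      _ = ∑ C ∈ T.powerset, (if C ⊆ U then ((-1 : ℤ) ^ (#T + #U)) • a C else 0) :=
          Finset.sum_subset (Finset.powerset_mono.2 (Finset.mem_powerset.1 hU))
            (fun C _ hC => if_neg (fun hsub => hC (Finset.mem_powerset.2 hsub)))
  rw [Finset.sum_congr rfl h1, Finset.sum_comm]
  have h2 : ∀ C ∈ T.powerset,
      (∑ U ∈ T.powerset, if C ⊆ U then ((-1 : ℤ) ^ (#T + #U)) • a C else 0)
        = if T = C then a C else 0 := by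
    intro C hC
    rw [← Finset.sum_filter, ← Finset.sum_smul]
    have : (∑ U ∈ T.powerset.filter (fun U => C ⊆ U), (-1 : ℤ) ^ (#T + #U))
        = if T = C then 1 else 0 := by
      have heq : (∑ U ∈ T.powerset.filter (fun U => C ⊆ U), (-1 : ℤ) ^ (#T + #U))
          = (-1 : ℤ) ^ #T * ∑ U ∈ T.powerset.filter (fun U => C ⊆ U), (-1 : ℤ) ^ #U := by
        rw [Finset.mul_sum]
        exact Finset.sum_congr rfl fun U _ => (pow_add _ _ _)
      rw [heq, alt_filter (Finset.mem_powerset.1 hC)]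
      by_cases h : T = C
      · subst h; simp [← pow_add, ← two_mul]
      · simp [h]
    rw [this]
    by_cases h : T = C <;> simp [h]
  rw [Finset.sum_congr rfl h2, Finset.sum_ite_eq]
  simp

lemma mu_comp {N : Type*} [AddCommGroup N] (φ : M →+ N) (G : Finset α → M) (T : Finset α) :
    mu (fun S => φ (G S)) T = φ (mu G T) := by
  unfold mu
  rw [map_sum]
  exact Finset.sum_congr rfl fun U _ => (map_zsmul φ _ _).symm

end Stmt15Aux


namespace Stmt15Aux

variable {α : Type*} [DecidableEq α] {M : Type*} [AddCommGroup M]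

/-- `G` has multilinear degree at most `D`. -/
def HasDeg (G : Finset α → M) (D : ℕ) : Prop :=
  ∃ a : Finset α → M, (∀ C, D < #C → a C = 0) ∧ ∀ S, G S = ∑ C ∈ S.powerset, a C

lemma hasDeg_of_mu {G : Finset α → M} {D : ℕ} (h : ∀ T, D < #T → mu G T = 0) :
    HasDeg G D :=
  ⟨mu G, h, fun S => (sum_mu G S).symm⟩

lemma mu_of_hasDeg {G : Finset α → M} {D : ℕ} (h : HasDeg G D) :
    ∀ T, D < #T → mu G T = 0 := by
  obtain ⟨a, ha0, ha⟩ := h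
  intro T hT
  rw [mu_eq_coeff ha T]
  exact ha0 T hT

lemma hasDeg_mono {G : Finset α → M} {D D' : ℕ} (hDD : D ≤ D') (h : HasDeg G D) :
    HasDeg G D' := by
  obtain ⟨a, ha0, ha⟩ := h
  exact ⟨a, fun C hC => ha0 C (lt_of_le_of_lt hDD hC), ha⟩

lemma hasDeg_const (c : M) (D : ℕ) : HasDeg (fun _ : Finset α => c) D := by
  refine ⟨fun C => if C = ∅ then c else 0, ?_, ?_⟩
  · intro C hC
    dsimp only
    rw [if_neg]
    intro h
    subst h
    simp at hC
  · intro S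
    dsimp only
    rw [Finset.sum_ite_eq' S.powerset ∅ (fun _ => c)]
    simp

lemma hasDeg_add {G H : Finset α → M} {D : ℕ} (hG : HasDeg G D) (hH : HasDeg H D) :
    HasDeg (fun S => G S + H S) D := by
  obtain ⟨a, ha0, ha⟩ := hG
  obtain ⟨b, hb0, hb⟩ := hH
  refine ⟨fun C => a C + b C, fun C hC => by dsimp only; rw [ha0 C hC, hb0 C hC, add_zero],
    fun S => ?_⟩
  show G S + H S = _
  rw [ha S, hb S, ← Finset.sum_add_distrib]

lemma hasDeg_neg {G : Finset α → M} {D : ℕ} (hG : HasDeg G D) :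
    HasDeg (fun S => -G S) D := by
  obtain ⟨a, ha0, ha⟩ := hG
  refine ⟨fun C => -a C, fun C hC => by dsimp only; rw [ha0 C hC, neg_zero], fun S => ?_⟩
  show -G S = _
  rw [ha S, ← Finset.sum_neg_distrib]

lemma hasDeg_map {N : Type*} [AddCommGroup N] (φ : M →+ N) {G : Finset α → M} {D : ℕ}
    (hG : HasDeg G D) : HasDeg (fun S => φ (G S)) D := by
  obtain ⟨a, ha0, ha⟩ := hG
  refine ⟨fun C => φ (a C), fun C hC => by dsimp only; rw [ha0 C hC, map_zero], fun S => ?_⟩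
  show φ (G S) = _
  rw [ha S, map_sum]

section Ring

variable {R : Type*} [CommRing R]

lemma hasDeg_mul {G H : Finset α → R} {D1 D2 : ℕ}
    (hG : HasDeg G D1) (hH : HasDeg H D2) : HasDeg (fun S => G S * H S) (D1 + D2) := by
  obtain ⟨a, ha0, ha⟩ := hG
  obtain ⟨b, hb0, hb⟩ := hH
  refine ⟨fun C => ∑ A ∈ C.powerset, ∑ B ∈ C.powerset,
      if A ∪ B = C then a A * b B else 0, ?_, ?_⟩
  · intro C hC
    dsimp only
    refine Finset.sum_eq_zero fun A hA => Finset.sum_eq_zero fun B hB => ?_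
    split_ifs with h
    · by_cases h1 : D1 < #A
      · rw [ha0 A h1, zero_mul]
      by_cases h2 : D2 < #B
      · rw [hb0 B h2, mul_zero]
      exfalso
      push_neg at h1 h2
      have hcc : #C ≤ #A + #B := h ▸ Finset.card_union_le A B
      omega
    · rfl
  · intro S
    show G S * H S = _
    have step1 : ∀ C ∈ S.powerset,
        (∑ A ∈ C.powerset, ∑ B ∈ C.powerset, if A ∪ B = C then a A * b B else 0)
          = ∑ A ∈ S.powerset, ∑ B ∈ S.powerset, if A ∪ B = C then a A * b B else 0 := by
      intro C hC
      have inner : ∀ A, A ⊆ C →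
          (∑ B ∈ C.powerset, if A ∪ B = C then a A * b B else 0)
            = ∑ B ∈ S.powerset, if A ∪ B = C then a A * b B else 0 := by
        intro A _
        refine Finset.sum_subset (Finset.powerset_mono.2 (Finset.mem_powerset.1 hC)) ?_
        intro B _ hB
        rw [if_neg]
        intro hu
        exact hB (Finset.mem_powerset.2 (hu ▸ Finset.subset_union_right))
      calc (∑ A ∈ C.powerset, ∑ B ∈ C.powerset, if A ∪ B = C then a A * b B else 0)
          = ∑ A ∈ C.powerset, ∑ B ∈ S.powerset, if A ∪ B = C then a A * b B else 0 :=
            Finset.sum_congr rfl fun A hA => inner A (Finset.mem_powerset.1 hA)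
        _ = ∑ A ∈ S.powerset, ∑ B ∈ S.powerset, if A ∪ B = C then a A * b B else 0 := by
            refine Finset.sum_subset (Finset.powerset_mono.2 (Finset.mem_powerset.1 hC)) ?_
            intro A _ hA
            refine Finset.sum_eq_zero fun B _ => ?_
            rw [if_neg]
            intro hu
            exact hA (Finset.mem_powerset.2 (hu ▸ Finset.subset_union_left))
    have step2 : (∑ C ∈ S.powerset, ∑ A ∈ S.powerset, ∑ B ∈ S.powerset,
        if A ∪ B = C then a A * b B else 0)
        = ∑ A ∈ S.powerset, ∑ B ∈ S.powerset, a A * b B := by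
      rw [Finset.sum_comm]
      refine Finset.sum_congr rfl fun A hA => ?_
      rw [Finset.sum_comm]
      refine Finset.sum_congr rfl fun B hB => ?_
      rw [Finset.sum_ite_eq S.powerset (A ∪ B) (fun _ => a A * b B)]
      rw [if_pos (Finset.mem_powerset.2 (Finset.union_subset
        (Finset.mem_powerset.1 hA) (Finset.mem_powerset.1 hB)))]
    calc G S * H S = ∑ A ∈ S.powerset, ∑ B ∈ S.powerset, a A * b B := by
          rw [ha S, hb S, Finset.sum_mul_sum]
      _ = ∑ C ∈ S.powerset, ∑ A ∈ S.powerset, ∑ B ∈ S.powerset,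
            if A ∪ B = C then a A * b B else 0 := step2.symm
      _ = ∑ C ∈ S.powerset, ∑ A ∈ C.powerset, ∑ B ∈ C.powerset,
            if A ∪ B = C then a A * b B else 0 :=
          (Finset.sum_congr rfl step1).symm

lemma hasDeg_prod {ι : Type*} (s : Finset ι) (g : ι → Finset α → R) (Dg : ι → ℕ)
    (h : ∀ i ∈ s, HasDeg (g i) (Dg i)) :
    HasDeg (fun S => ∏ i ∈ s, g i S) (∑ i ∈ s, Dg i) := by
  classical
  induction s using Finset.induction_on with
  | empty => simpa using hasDeg_const (1 : R) 0
  | insert i s hnotmem ih =>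
    rw [Finset.sum_insert hnotmem]
    have := hasDeg_mul (h i (Finset.mem_insert_self i s))
      (ih fun j hj => h j (Finset.mem_insert_of_mem hj))
    simpa [Finset.prod_insert hnotmem] using this

lemma hasDeg_pow {G : Finset α → R} {D : ℕ} (hG : HasDeg G D) (m : ℕ) :
    HasDeg (fun S => G S ^ m) (m * D) := by
  induction m with
  | zero => simpa using hasDeg_const (1 : R) 0
  | succ m ih =>
    have := hasDeg_mul ih hG
    have heq : m * D + D = (m + 1) * D := by ring
    rw [heq] at this
    simpa [pow_succ] using this

lemma hasDeg_one_sub {G : Finset α → R} {D : ℕ} (hG : HasDeg G D) :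
    HasDeg (fun S => 1 - G S) D := by
  have h1 : HasDeg (fun _ : Finset α => (1 : R)) D := hasDeg_const 1 D
  have := hasDeg_add h1 (hasDeg_neg hG)
  simpa [sub_eq_add_neg] using this

end Ring

end Stmt15Aux
namespace Stmt15Aux

open Finset

/-! ### The embedding `ZMod q →+ ℝ/ℤ` -/

noncomputable def psi (q : ℕ) : ZMod q →+ AddCircle (1 : ℝ) :=
  ZMod.lift q ⟨(zmultiplesHom (AddCircle (1 : ℝ))) ((((q : ℝ))⁻¹ : ℝ) : AddCircle (1 : ℝ)), by
    simp only [zmultiplesHom_apply]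
    rcases eq_or_ne q 0 with h | h
    · simp [h]
    · have : ((q : ℤ) • (((q : ℝ))⁻¹ : ℝ) : ℝ) = 1 := by
        rw [zsmul_eq_mul]
        push_cast
        field_simp
      rw [← AddCircle.coe_zsmul, this]
      exact AddCircle.coe_period 1⟩

lemma psi_intCast (q : ℕ) (m : ℤ) :
    psi q ((m : ZMod q)) = (((m : ℝ) / (q : ℝ) : ℝ) : AddCircle (1 : ℝ)) := by
  unfold psi
  rw [ZMod.lift_coe]
  simp only [zmultiplesHom_apply]
  rw [← AddCircle.coe_zsmul]
  congr 1
  rw [zsmul_eq_mul, div_eq_mul_inv]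

lemma psi_injective (q : ℕ) [NeZero q] : Function.Injective (psi q) := by
  rw [injective_iff_map_eq_zero]
  intro x hx
  have hq : (0 : ℝ) < q := by
    have := NeZero.ne q
    positivity
  have hxval : x = ((x.val : ℤ) : ZMod q) := by
    push_cast
    rw [ZMod.natCast_zmod_val]
  rw [hxval, psi_intCast] at hx
  rw [AddCircle.coe_eq_zero_iff] at hx
  obtain ⟨z, hz⟩ := hx
  rw [zsmul_eq_mul, mul_one] at hz
  have : ((x.val : ℤ) : ℝ) = ((z * q : ℤ) : ℝ) := by
    push_cast
    push_cast at hz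
    field_simp at hz ⊢
    linarith [hz]
  have hzq : (x.val : ℤ) = z * q := Int.cast_injective this
  have hdvd : (q : ℤ) ∣ (x.val : ℤ) := ⟨z, by linarith [hzq]⟩
  have hdvd' : q ∣ x.val := Int.ofNat_dvd.mp (by exact_mod_cast hdvd)
  have hlt : x.val < q := ZMod.val_lt x
  have hv0 : x.val = 0 := by
    rcases Nat.eq_zero_of_dvd_of_lt hdvd' hlt with h
    · exact h
  rw [hxval]
  rw [hv0]
  simp

end Stmt15Aux
namespace Stmt15Aux

open Finset

variable {M : Type*} [AddCommGroup M]

/-- Boolean indicator vector of a finset. -/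
def chi (p : ℕ) {n : ℕ} (S : Finset (Fin n)) : Fin n → ZMod p :=
  fun j => if j ∈ S then 1 else 0

lemma isBool_chi (p n : ℕ) (S : Finset (Fin n)) : IsBool (chi p S) := by
  intro j
  unfold chi
  split_ifs <;> simp

lemma chi_empty (p n : ℕ) : chi p (∅ : Finset (Fin n)) = 0 := by
  funext j; simp [chi]

lemma chi_insert (p n : ℕ) {i : Fin n} {U : Finset (Fin n)} (h : i ∉ U) :
    chi p (insert i U) = chi p U + chi p {i} := by
  funext j
  unfold chi
  rcases eq_or_ne j i with rfl | hj
  · simp [h]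
  · simp [hj, Finset.mem_insert]

/-- Iterated derivatives of order `≥ d+1` of a nonclassical polynomial vanish. -/
lemma foldr_eq_zero {V : Type*} [Add V] {d : ℕ} {f : V → M} (hf : IsNCPoly d f) :
    ∀ l : List V, d + 1 ≤ l.length → l.foldr D f = 0 := by
  intro l
  induction l with
  | nil => intro h; simp at h
  | cons h t ih =>
    intro hlen
    rcases Nat.lt_or_ge t.length (d + 1) with hc | hc
    · have : t.length = d := by simp at hlen; omega
      exact hf (h :: t) (by simp [this])
    · have ht : t.foldr D f = 0 := ih hc
      show D h (t.foldr D f) = 0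
      rw [ht]
      funext x
      show (0 : V → M) (x + h) - (0 : V → M) x = 0
      simp

/-- The key alternating-sum formula: if the `#T`-fold derivatives vanish, the
alternating sum of `f` over translate of subcube indexed by `T` vanishes. -/
lemma alt_sum_eq_zero {p n : ℕ} :
    ∀ (T : Finset (Fin n)) (f : (Fin n → ZMod p) → M) (x : Fin n → ZMod p),
    (∀ l : List (Fin n → ZMod p), l.length = #T → l.foldr D f = 0) →
    (∑ U ∈ T.powerset, ((-1 : ℤ) ^ (#T + #U)) • f (x + chi p U)) = 0 := by
  intro T
  induction T using Finset.induction_on with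
  | empty =>
    intro f x h
    have h0 : f = 0 := h [] rfl
    simp [chi_empty, h0]
  | insert i T hnotmem ih =>
    intro f x h
    rw [Finset.sum_powerset_insert hnotmem]
    have hcardT : #(insert i T) = #T + 1 := Finset.card_insert_of_notMem hnotmem
    have step : ∀ U ∈ T.powerset,
        ((-1 : ℤ) ^ (#(insert i T) + #U)) • f (x + chi p U)
          + ((-1 : ℤ) ^ (#(insert i T) + #(insert i U))) • f (x + chi p (insert i U))
        = ((-1 : ℤ) ^ (#T + #U)) • (D (chi p {i}) f) (x + chi p U) := by
      intro U hU
      have hiU : i ∉ U := fun hiU => hnotmem (Finset.mem_powerset.1 hU hiU)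
      have hcardU : #(insert i U) = #U + 1 := Finset.card_insert_of_notMem hiU
      rw [hcardT, hcardU, chi_insert p n hiU]
      have e1 : ((-1 : ℤ) ^ (#T + 1 + #U)) = -((-1 : ℤ) ^ (#T + #U)) := by
        rw [show #T + 1 + #U = (#T + #U) + 1 by omega, pow_succ]
        ring
      have e2 : ((-1 : ℤ) ^ (#T + 1 + (#U + 1))) = (-1 : ℤ) ^ (#T + #U) := by
        rw [show #T + 1 + (#U + 1) = (#T + #U) + 2 by omega, pow_add]
        ring
      rw [e1, e2]
      show _ = ((-1 : ℤ) ^ (#T + #U)) • (f ((x + chi p U) + chi p {i}) - f (x + chi p U))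
      rw [smul_sub]
      have : x + (chi p U + chi p {i}) = x + chi p U + chi p {i} := by
        rw [add_assoc]
      rw [this, neg_smul]
      abel
    rw [← Finset.sum_add_distrib]
    rw [Finset.sum_congr rfl step]
    refine ih (D (chi p {i}) f) x ?_
    intro l hl
    have : (l ++ [chi p {i}]).foldr D f = 0 := by
      refine h _ ?_
      simp [hl, hcardT]
    rw [List.foldr_append] at this
    exact this

/-- `∑_{j<k} (p-1)p^j = p^k - 1`. -/
lemma geom_sum_eq (p : ℕ) (hp : 1 ≤ p) (k : ℕ) :
    ∑ j ∈ Finset.range k, (p - 1) * p ^ j = p ^ k - 1 := by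
  induction k with
  | zero => simp
  | succ k ih =>
    rw [Finset.sum_range_succ, ih]
    have h1 : 1 ≤ p ^ k := Nat.one_le_pow _ _ hp
    have h2 : (p - 1) * p ^ k = p * p ^ k - p ^ k := by
      rw [Nat.sub_mul, one_mul]
    have h3 : p ^ k ≤ p * p ^ k := Nat.le_mul_of_pos_left _ (by omega)
    rw [h2, pow_succ]
    rw [mul_comm (p ^ k) p]
    omega

/-- divisibility by `p^k` in terms of base-`p` digits -/
lemma dvd_iff_digits (p : ℕ) (hp : 1 < p) (k : ℕ) (N : ℕ) :
    p ^ k ∣ N ↔ ∀ j < k, N / p ^ j % p = 0 := by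
  induction k generalizing N with
  | zero => simp
  | succ k ih =>
    constructor
    · intro hdvd j hj
      have hd' : p ^ (j + 1) ∣ N := dvd_trans (pow_dvd_pow p (by omega)) hdvd
      obtain ⟨c, rfl⟩ := hd'
      rw [pow_succ, mul_assoc, Nat.mul_div_cancel_left _ (by positivity : 0 < p ^ j)]
      exact Nat.mul_mod_right p c
    · intro h
      have h0 : p ∣ N := by
        have := h 0 (by omega)
        simpa [Nat.dvd_iff_mod_eq_zero] using this
      obtain ⟨M, rfl⟩ := h0
      have hM : p ^ k ∣ M := by
        rw [ih]
        intro j hj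
        have := h (j + 1) (by omega)
        rwa [pow_succ', Nat.mul_div_mul_left _ _ (by omega : 0 < p)] at this
      rw [pow_succ']
      exact mul_dvd_mul_left p hM

/-- Lucas: `choose N (p^j) ≡ j`-th base-`p` digit of `N` mod `p`. -/
lemma choose_pow_cast (p : ℕ) [Fact p.Prime] (j : ℕ) :
    ∀ N : ℕ, ((N.choose (p ^ j) : ZMod p)) = ((N / p ^ j % p : ℕ) : ZMod p) := by
  have hp : 1 < p := (Fact.out : p.Prime).one_lt
  induction j with
  | zero =>
    intro N
    simp only [pow_zero, Nat.choose_one_right, Nat.div_one]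
    exact (ZMod.natCast_mod N p).symm
  | succ j ih =>
    intro N
    have hmod := (Choose.choose_modEq_choose_mod_mul_choose_div_nat (p := p)
      (n := N) (k := p ^ (j + 1)))
    have h1 : p ^ (j + 1) % p = 0 := by
      rw [pow_succ']
      exact Nat.mul_mod_right p _
    have h2 : p ^ (j + 1) / p = p ^ j := by
      rw [pow_succ']
      exact Nat.mul_div_cancel_left _ (by omega)
    rw [h1, h2, Nat.choose_zero_right, one_mul] at hmod
    have hcast : ((N.choose (p ^ (j + 1)) : ZMod p)) = (((N / p).choose (p ^ j) : ℕ) : ZMod p) :=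
      (ZMod.natCast_eq_natCast_iff _ _ _).mpr hmod
    rw [hcast, ih (N / p), Nat.div_div_eq_div_mul, ← pow_succ']

end Stmt15Aux
namespace Stmt15Aux

open Finset

variable {α : Type*} [DecidableEq α]

lemma cast_descFactorial_aux : ∀ (m N : ℕ), m ≤ N →
    ((N.descFactorial m : ℕ) : ℚ) = ∏ t ∈ Finset.range m, ((N : ℚ) - t) := by
  intro m
  induction m with
  | zero => intro N _; simp
  | succ m ih =>
    intro N h
    rw [Finset.prod_range_succ, ← ih N (by omega), Nat.descFactorial_succ]
    have hm : m ≤ N := by omega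
    push_cast [hm]
    ring

lemma cast_descFactorial_prod (N m : ℕ) :
    ((N.descFactorial m : ℕ) : ℚ) = ∏ t ∈ Finset.range m, ((N : ℚ) - t) := by
  rcases Nat.lt_or_ge N m with h | h
  · rw [Nat.descFactorial_eq_zero_iff_lt.2 h, Nat.cast_zero]
    symm
    refine Finset.prod_eq_zero (Finset.mem_range.2 h) ?_
    simp
  · exact cast_descFactorial_aux m N h

lemma cast_choose_prod (N m : ℕ) :
    ((N.choose m : ℕ) : ℚ) = ((m.factorial : ℚ))⁻¹ * ∏ t ∈ Finset.range m, ((N : ℚ) - t) := by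
  rw [← cast_descFactorial_prod, Nat.choose_eq_descFactorial_div_factorial]
  rw [Nat.cast_div (Nat.factorial_dvd_descFactorial N m)
    (by exact_mod_cast (Nat.factorial_ne_zero m))]
  ring

lemma hasDeg_choose (p' : ℕ) {G : Finset α → ℕ} {Dd : ℕ}
    (h : HasDeg (fun S => (G S : ℤ)) Dd) (m : ℕ) :
    HasDeg (fun S => (((G S).choose m : ℕ) : ZMod p')) (m * Dd) := by
  have hQ : HasDeg (fun S => ((G S : ℕ) : ℚ)) Dd := by
    have := hasDeg_map (Int.castAddHom ℚ) h
    simpa using this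
  have hprod : HasDeg (fun S => ∏ t ∈ Finset.range m, ((G S : ℚ) - t)) (m * Dd) := by
    have hfac : ∀ t ∈ Finset.range m, HasDeg (fun S : Finset α => (G S : ℚ) - (t : ℚ)) Dd := by
      intro t _
      have hc : HasDeg (fun _ : Finset α => -(t : ℚ)) Dd := hasDeg_const _ _
      have := hasDeg_add hQ hc
      simpa [sub_eq_add_neg] using this
    have := hasDeg_prod (Finset.range m) (fun t S => (G S : ℚ) - t) (fun _ => Dd) hfac
    simpa [Finset.sum_const, Finset.card_range, smul_eq_mul] using this
  have hchooseQ : HasDeg (fun S => (((G S).choose m : ℕ) : ℚ)) (m * Dd) := by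
    have h1 : HasDeg (fun _ : Finset α => ((m.factorial : ℚ))⁻¹) 0 := hasDeg_const _ _
    have h2 := hasDeg_mul h1 hprod
    rw [zero_add] at h2
    have heq : (fun S => (((G S).choose m : ℕ) : ℚ))
        = fun S => ((m.factorial : ℚ))⁻¹ * ∏ t ∈ Finset.range m, ((G S : ℚ) - t) := by
      funext S
      exact cast_choose_prod (G S) m
    rw [heq]
    exact h2
  have hmuZ : ∀ T, m * Dd < #T → mu (fun S => (((G S).choose m : ℕ) : ℤ)) T = 0 := by
    intro T hT
    have hQ0 : mu (fun S => (((G S).choose m : ℕ) : ℚ)) T = 0 := mu_of_hasDeg hchooseQ T hT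
    have hcomp := mu_comp (Int.castAddHom ℚ) (fun S => (((G S).choose m : ℕ) : ℤ)) T
    have heqf : (fun S => (Int.castAddHom ℚ) ((((G S).choose m : ℕ) : ℤ)))
        = fun S => (((G S).choose m : ℕ) : ℚ) := by
      funext S
      simp
    rw [heqf, hQ0] at hcomp
    have : ((mu (fun S => (((G S).choose m : ℕ) : ℤ)) T : ℤ) : ℚ) = 0 := hcomp.symm
    exact_mod_cast this
  refine hasDeg_of_mu ?_
  intro T hT
  have hcomp := mu_comp (Int.castAddHom (ZMod p')) (fun S => (((G S).choose m : ℕ) : ℤ)) T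
  have heqf : (fun S => (Int.castAddHom (ZMod p')) ((((G S).choose m : ℕ) : ℤ)))
      = fun S => (((G S).choose m : ℕ) : ZMod p') := by
    funext S
    simp
  rw [heqf, hmuZ T hT, map_zero] at hcomp
  exact hcomp

end Stmt15Aux

open Stmt15Aux in
/-- Common Boolean root for several nonclassical polynomials vanishing at `0`:
if `n > (p^k - 1)·d·r` then the `r` polynomials have a common nonzero root. -/
theorem stmt15 (p n d k r : ℕ) [Fact p.Prime]
    (f : Fin r → (Fin n → ZMod p) → AddCircle (1 : ℝ))
    (hdeg : ∀ i, IsNCPoly d (f i))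
    (hval : ∀ i, ∀ x : Fin n → ZMod p, IsBool x →
      ∃ m : ℤ, f i x = ((((m : ℝ) / p ^ k : ℝ)) : AddCircle (1 : ℝ)))
    (h0 : ∀ i, f i 0 = 0) (hn : (p ^ k - 1) * d * r < n) :
    ∃ x : Fin n → ZMod p, IsBool x ∧ x ≠ 0 ∧ ∀ i, f i x = 0 := by
  classical
  by_contra hcon
  push_neg at hcon
  have hp : p.Prime := Fact.out
  have hp1 : 1 < p := hp.one_lt
  haveI : Fact (1 < p) := ⟨hp1⟩
  haveI : NeZero (p ^ k) := ⟨pow_ne_zero k hp.ne_zero⟩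
  -- Step 1: transfer the values to `ZMod (p^k)`.
  have hvalchoice : ∀ (i : Fin r) (S : Finset (Fin n)),
      ∃ m : ℤ, f i (chi p S) = ((((m : ℝ) / p ^ k : ℝ)) : AddCircle (1 : ℝ)) :=
    fun i S => hval i (chi p S) (isBool_chi p n S)
  set F : Fin r → Finset (Fin n) → ZMod (p ^ k) :=
    fun i S => (((hvalchoice i S).choose : ℤ) : ZMod (p ^ k)) with hF
  have hpsiF : ∀ i S, psi (p ^ k) (F i S) = f i (chi p S) := by
    intro i S
    have spec := (hvalchoice i S).choose_spec
    calc psi (p ^ k) (F i S)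
        = ((((hvalchoice i S).choose : ℝ) / ((p ^ k : ℕ) : ℝ) : ℝ) : AddCircle (1 : ℝ)) :=
          psi_intCast _ _
      _ = ((((hvalchoice i S).choose : ℝ) / (p : ℝ) ^ k : ℝ) : AddCircle (1 : ℝ)) := by
          norm_cast
      _ = f i (chi p S) := spec.symm
  -- Step 2: `F i` has Möbius degree at most `d`.
  have hmuF : ∀ i T, d < #T → mu (F i) T = 0 := by
    intro i T hT
    apply psi_injective (p ^ k)
    rw [map_zero, ← mu_comp (psi (p ^ k)) (F i) T]
    have hfn : (fun S => psi (p ^ k) (F i S)) = fun S => f i (chi p S) := funext (hpsiF i)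
    rw [hfn]
    have key := alt_sum_eq_zero T (f i) 0
      (fun l hl => foldr_eq_zero (hdeg i) l (by omega))
    unfold mu
    rw [← key]
    refine Finset.sum_congr rfl fun U _ => ?_
    rw [zero_add]
  -- Step 3: the integer lift.
  set Nf : Fin r → Finset (Fin n) → ℕ :=
    fun i S => ∑ T ∈ S.powerset, (mu (F i) T).val with hNf
  have hNdeg : ∀ i, HasDeg (fun S => (Nf i S : ℤ)) d := by
    intro i
    refine ⟨fun C => ((mu (F i) C).val : ℤ), ?_, ?_⟩
    · intro C hC
      dsimp only
      rw [hmuF i C hC]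
      simp
    · intro S
      show ((Nf i S : ℕ) : ℤ) = _
      rw [hNf]
      push_cast
      rfl
  have hNF : ∀ i S, ((Nf i S : ℕ) : ZMod (p ^ k)) = F i S := by
    intro i S
    show ((∑ T ∈ S.powerset, (mu (F i) T).val : ℕ) : ZMod (p ^ k)) = F i S
    push_cast
    calc (∑ T ∈ S.powerset, ((mu (F i) T).val : ZMod (p ^ k)))
        = ∑ T ∈ S.powerset, mu (F i) T :=
          Finset.sum_congr rfl fun T _ => ZMod.natCast_zmod_val _
      _ = F i S := sum_mu _ S
  have hdvd_iff : ∀ i S, (p ^ k ∣ Nf i S ↔ f i (chi p S) = 0) := by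
    intro i S
    rw [← ZMod.natCast_eq_zero_iff, hNF]
    constructor
    · intro h
      rw [← hpsiF, h, map_zero]
    · intro h
      apply psi_injective (p ^ k)
      rw [map_zero, hpsiF]
      exact h
  -- Step 4: digit functions.
  set Dig : Fin r → ℕ → Finset (Fin n) → ZMod p :=
    fun i j S => (((Nf i S).choose (p ^ j) : ℕ) : ZMod p) with hDig
  have hDigdeg : ∀ i j, HasDeg (Dig i j) (p ^ j * d) :=
    fun i j => hasDeg_choose p (hNdeg i) (p ^ j)
  set hfun : Fin r → Finset (Fin n) → ZMod p :=
    fun i S => ∏ j ∈ Finset.range k, (1 - Dig i j S ^ (p - 1)) with hhfun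
  have hhdeg : ∀ i, HasDeg (hfun i) ((p ^ k - 1) * d) := by
    intro i
    have hfac : ∀ j ∈ Finset.range k,
        HasDeg (fun S => 1 - Dig i j S ^ (p - 1)) ((p - 1) * (p ^ j * d)) :=
      fun j _ => hasDeg_one_sub (hasDeg_pow (hDigdeg i j) (p - 1))
    have hmain := hasDeg_prod (Finset.range k) (fun j S => 1 - Dig i j S ^ (p - 1))
      (fun j => (p - 1) * (p ^ j * d)) hfac
    have heq : (∑ j ∈ Finset.range k, (p - 1) * (p ^ j * d)) = (p ^ k - 1) * d := by
      calc (∑ j ∈ Finset.range k, (p - 1) * (p ^ j * d))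
          = (∑ j ∈ Finset.range k, (p - 1) * p ^ j) * d := by
            rw [Finset.sum_mul]
            exact Finset.sum_congr rfl fun j _ => (mul_assoc _ _ _).symm
        _ = (p ^ k - 1) * d := by rw [geom_sum_eq p (by omega) k]
    rw [heq] at hmain
    exact hmain
  -- Step 5: global product.
  set H : Finset (Fin n) → ZMod p := fun S => ∏ i : Fin r, hfun i S with hH
  have hHdeg : HasDeg H ((p ^ k - 1) * d * r) := by
    have hmain := hasDeg_prod (Finset.univ : Finset (Fin r)) (fun i S => hfun i S)
      (fun _ => (p ^ k - 1) * d) (fun i _ => hhdeg i)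
    have heq : (∑ _i ∈ (Finset.univ : Finset (Fin r)), (p ^ k - 1) * d)
        = (p ^ k - 1) * d * r := by
      rw [Finset.sum_const, Finset.card_univ, Fintype.card_fin, smul_eq_mul]
      ring
    rw [heq] at hmain
    exact hmain
  -- Step 6: values of `H`.
  have hH_eq : ∀ S : Finset (Fin n), H S = if S = ∅ then 1 else 0 := by
    intro S
    rcases eq_or_ne S ∅ with rfl | hS
    · rw [if_pos rfl]
      show (∏ i : Fin r, hfun i ∅) = 1
      refine Finset.prod_eq_one fun i _ => ?_
      show (∏ j ∈ Finset.range k, (1 - Dig i j ∅ ^ (p - 1))) = 1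
      refine Finset.prod_eq_one fun j hj => ?_
      have hzero : f i (chi p ∅) = 0 := by
        rw [chi_empty]
        exact h0 i
      have hdvd : p ^ k ∣ Nf i ∅ := (hdvd_iff i ∅).2 hzero
      have hdigit : Nf i ∅ / p ^ j % p = 0 :=
        (dvd_iff_digits p hp1 k (Nf i ∅)).1 hdvd j (Finset.mem_range.1 hj)
      have hDig0 : Dig i j ∅ = 0 := by
        show (((Nf i ∅).choose (p ^ j) : ℕ) : ZMod p) = 0
        rw [choose_pow_cast p j (Nf i ∅), hdigit]
        simp
      rw [hDig0, zero_pow (by omega : p - 1 ≠ 0), sub_zero]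
    · rw [if_neg hS]
      have hchi_ne : chi p S ≠ 0 := by
        obtain ⟨i0, hi0⟩ := Finset.nonempty_iff_ne_empty.2 hS
        intro hc
        have : chi p S i0 = 0 := by rw [hc]; rfl
        rw [show chi p S i0 = 1 from if_pos hi0] at this
        exact one_ne_zero this
      obtain ⟨i, hi⟩ := hcon (chi p S) (isBool_chi p n S) hchi_ne
      have hnotdvd : ¬ p ^ k ∣ Nf i S := fun hd => hi ((hdvd_iff i S).1 hd)
      have : ¬ ∀ j < k, Nf i S / p ^ j % p = 0 := by
        intro hall
        exact hnotdvd ((dvd_iff_digits p hp1 k (Nf i S)).2 hall)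
      push_neg at this
      obtain ⟨j, hjk, hjne⟩ := this
      have hDigne : Dig i j S ≠ 0 := by
        show (((Nf i S).choose (p ^ j) : ℕ) : ZMod p) ≠ 0
        rw [choose_pow_cast p j (Nf i S)]
        rw [Ne, ZMod.natCast_eq_zero_iff]
        intro hdd
        exact hjne (Nat.eq_zero_of_dvd_of_lt hdd (Nat.mod_lt _ (by omega)))
      show (∏ i : Fin r, hfun i S) = 0
      refine Finset.prod_eq_zero (Finset.mem_univ i) ?_
      show (∏ j ∈ Finset.range k, (1 - Dig i j S ^ (p - 1))) = 0
      refine Finset.prod_eq_zero (Finset.mem_range.2 hjk) ?_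
      rw [ZMod.pow_card_sub_one_eq_one hDigne, sub_self]
  -- Step 7: contradiction via `mu H univ`.
  have hcard_univ : #(Finset.univ : Finset (Fin n)) = n := by
    rw [Finset.card_univ, Fintype.card_fin]
  have hmu0 : mu H Finset.univ = 0 :=
    mu_of_hasDeg hHdeg Finset.univ (by rw [hcard_univ]; exact hn)
  have hmu1 : mu H Finset.univ = ((-1 : ℤ) ^ n) • (1 : ZMod p) := by
    unfold mu
    calc (∑ U ∈ (Finset.univ : Finset (Fin n)).powerset,
            ((-1 : ℤ) ^ (#(Finset.univ : Finset (Fin n)) + #U)) • H U)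
        = ∑ U ∈ (Finset.univ : Finset (Fin n)).powerset,
            (if U = ∅ then ((-1 : ℤ) ^ (n + #U)) • (1 : ZMod p) else 0) := by
          refine Finset.sum_congr rfl fun U _ => ?_
          rw [hH_eq U, hcard_univ]
          split_ifs with h
          · rfl
          · rw [smul_zero]
      _ = ((-1 : ℤ) ^ (n + #(∅ : Finset (Fin n)))) • (1 : ZMod p) := by
          rw [Finset.sum_ite_eq' _ ∅ (fun U => ((-1 : ℤ) ^ (n + #U)) • (1 : ZMod p))]
          rw [if_pos (Finset.empty_mem_powerset _)]
      _ = ((-1 : ℤ) ^ n) • (1 : ZMod p) := by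
          rw [Finset.card_empty, add_zero]
  rw [hmu0] at hmu1
  have : ((-1 : ℤ) ^ n) • (1 : ZMod p) ≠ 0 := by
    rcases Nat.even_or_odd n with he | ho
    · rw [Even.neg_one_pow he, one_smul]
      exact one_ne_zero
    · rw [Odd.neg_one_pow ho, neg_smul, one_smul]
      exact neg_ne_zero.2 one_ne_zero
  exact this hmu1.symm
end

section
/- Let p₁,…,p_r be distinct primes with p = max p_i, and let f_i : (ZMod p_i)^n → ℝ/ℤ be nonclassical polynomials which weakly represent OR: f_i(0^n) = 0 for all i, and for each nonzero x ∈ {0,1}^n some f_i(x) ≠ 0. Then max_i deg(f_i) ≥ Ω((log_p n)^{1/r}); concretely, if all degrees are at most d then n < 2^{4(d+1)^r log₂ p}. -/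
open Finset

section Basic
variable {V M : Type*} [AddCommGroup V] [AddCommGroup M]

lemma D_zero (h : V) : D h (0 : V → M) = 0 := by
  funext x; simp [D]

lemma foldr_D_zero (l : List V) : l.foldr D (0 : V → M) = 0 := by
  induction l with
  | nil => rfl
  | cons a t ih => simp [List.foldr_cons, ih, D_zero]

lemma IsNCPoly.mono {d d' : ℕ} {f : V → M} (hf : IsNCPoly d f) (hdd : d ≤ d') :
    IsNCPoly d' f := by
  intro hs hlen
  have : d + 1 ≤ hs.length := by omega
  have hsplit : hs = hs.take (hs.length - (d+1)) ++ hs.drop (hs.length - (d+1)) :=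
    (List.take_append_drop _ hs).symm
  rw [hsplit, List.foldr_append, hf _ (by simp; omega), foldr_D_zero]

lemma IsNCPoly.D_succ {d : ℕ} {f : V → M} (hf : IsNCPoly (d+1) f) (h : V) :
    IsNCPoly d (D h f) := by
  intro hs hlen
  have : (hs ++ [h]).foldr D f = hs.foldr D (D h f) := by
    rw [List.foldr_append]; rfl
  rw [← this]
  exact hf _ (by simp [hlen])

lemma IsNCPoly.D_self {d : ℕ} {f : V → M} (hf : IsNCPoly d f) (h : V) :
    IsNCPoly d (D h f) :=
  (hf.mono (Nat.le_succ d)).D_succ h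

lemma IsNCPoly.D_iter {d : ℕ} {f : V → M} (hf : IsNCPoly d f) (h : V) (j : ℕ) (hj : 1 ≤ j)
    (hd : 1 ≤ d) : IsNCPoly (d-1) ((fun g => D h g)^[j] f) := by
  induction j with
  | zero => omega
  | succ j ih =>
    rcases Nat.eq_or_lt_of_le hj with hj1 | hj2
    · -- j = 0
      have : j = 0 := by omega
      subst this
      have h1 : (fun g => D h g)^[0+1] f = D h f := by simp
      rw [h1]
      obtain ⟨d', rfl⟩ : ∃ d', d = d' + 1 := ⟨d - 1, by omega⟩
      simpa using hf.D_succ h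
    · have := ih (by omega)
      rw [Function.iterate_succ_apply']
      exact this.D_self h

/-- Newton expansion: `f(x + m•h) = ∑ C(m,j) • (D_h^j f)(x)`. -/
lemma newton (f : V → M) (h : V) (m : ℕ) (x : V) :
    f (x + m • h) = ∑ j ∈ Finset.range (m+1), (m.choose j) • ((fun g => D h g)^[j] f) x := by
  induction m generalizing x with
  | zero => simp
  | succ m ih =>
    have hx : x + (m+1) • h = (x + h) + m • h := by
      rw [succ_nsmul]; abel
    rw [hx, ih]
    have hDit : ∀ j, ((fun g => D h g)^[j] f) (x + h)
        = ((fun g => D h g)^[j] f) x + ((fun g => D h g)^[j+1] f) x := by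
      intro j
      rw [Function.iterate_succ_apply']
      simp [D]
    simp_rw [hDit, smul_add, Finset.sum_add_distrib]
    rw [Finset.sum_range_succ' (fun j => ((m+1).choose j) • ((fun g => D h g)^[j] f) x)]
    have hps : ∀ j, ((m+1).choose (j+1)) • ((fun g => D h g)^[j+1] f) x
        = (m.choose j) • ((fun g => D h g)^[j+1] f) x
          + (m.choose (j+1)) • ((fun g => D h g)^[j+1] f) x := by
      intro j
      rw [Nat.choose_succ_succ, add_smul]
    simp_rw [hps]
    rw [Finset.sum_add_distrib]
    have h1 : ∑ j ∈ Finset.range (m+1), (m.choose j) • ((fun g => D h g)^[j] f) x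
        = ∑ j ∈ Finset.range m, (m.choose (j+1)) • ((fun g => D h g)^[j+1] f) x
          + (m.choose 0) • f x := by
      rw [Finset.sum_range_succ' (fun j => (m.choose j) • ((fun g => D h g)^[j] f) x)]
      rfl
    have h2 : ∑ j ∈ Finset.range (m+1), (m.choose (j+1)) • ((fun g => D h g)^[j+1] f) x
        = ∑ j ∈ Finset.range m, (m.choose (j+1)) • ((fun g => D h g)^[j+1] f) x := by
      rw [Finset.sum_range_succ]
      simp
    rw [h1, h2]
    simp [Nat.choose_zero_right]
    abel
end Basic

section Depth
variable {V M : Type*} [AddCommGroup V] [AddCommGroup M]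

lemma depth_D (p : ℕ) (hp : 0 < p) (hpV : ∀ v : V, p • v = 0) :
    ∀ (d : ℕ) (f : V → M), IsNCPoly d f → ∀ (h : V) (x : V), (p^d) • D h f x = 0 := by
  intro d
  induction d with
  | zero =>
    intro f hf h x
    have hD : D h f = 0 := hf [h] rfl
    simp [hD]
  | succ d ih =>
    intro f hf h x
    have hnewt := newton f h p x
    rw [hpV h, add_zero] at hnewt
    rw [Finset.sum_range_succ' (fun j => (p.choose j) • ((fun g => D h g)^[j] f) x)] at hnewt
    simp only [Nat.choose_zero_right, Function.iterate_zero_apply, one_smul] at hnewt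
    have hsum : ∑ j ∈ Finset.range p, (p.choose (j+1)) • ((fun g => D h g)^[j+1] f) x = 0 :=
      add_eq_right.mp hnewt.symm
    have h2 : ∑ j ∈ Finset.range p,
        (p.choose (j+1)) • ((p^d) • ((fun g => D h g)^[j+1] f) x) = 0 := by
      have h3 : (p^d) • (∑ j ∈ Finset.range p,
          (p.choose (j+1)) • ((fun g => D h g)^[j+1] f) x) = 0 := by
        rw [hsum, smul_zero]
      rw [Finset.smul_sum] at h3
      simpa [smul_comm (p^d)] using h3
    obtain ⟨P, rfl⟩ : ∃ P, p = P + 1 := ⟨p - 1, by omega⟩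
    rw [Finset.sum_range_succ'
      (fun j => ((P+1).choose (j+1)) • (((P+1)^d) • ((fun g => D (h:V) g)^[j+1] f) x))] at h2
    have hzero : ∀ j ∈ Finset.range P,
        ((P+1).choose (j+1+1)) • (((P+1)^d) • ((fun g => D h g)^[j+1+1] f) x) = 0 := by
      intro j _
      have hit : IsNCPoly d ((fun g => D h g)^[j+1] f) := by
        have := hf.D_iter h (j+1) (by omega) (by omega)
        simpa using this
      have hstep : (fun g => D h g)^[j+1+1] f = D h ((fun g => D h g)^[j+1] f) := by
        rw [Function.iterate_succ_apply']
      rw [hstep, ih _ hit h x, smul_zero]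
    rw [Finset.sum_congr rfl hzero] at h2
    simp only [Finset.sum_const_zero, zero_add, Nat.choose_one_right,
      Function.iterate_one] at h2
    rw [smul_smul, ← pow_succ'] at h2
    exact h2

lemma depth_val (p : ℕ) (hp : 0 < p) (hpV : ∀ v : V, p • v = 0)
    (d : ℕ) (f : V → M) (hf : IsNCPoly d f) (hf0 : f 0 = 0) (x : V) :
    (p^d) • f x = 0 := by
  have h1 := depth_D p hp hpV d f hf x 0
  simp only [D, zero_add, hf0, sub_zero] at h1
  exact h1
end Depth

section Moebius
variable {ι : Type*} [DecidableEq ι] {V M : Type*} [AddCommGroup V] [AddCommGroup M]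

noncomputable def Phi (f : V → M) (v : ι → V) (T : Finset ι) : V → M :=
  fun x => ∑ Q ∈ T.powerset, ((-1 : ℤ)^(T.card - Q.card)) • f (x + ∑ j ∈ Q, v j)

lemma Phi_empty (f : V → M) (v : ι → V) : Phi f v ∅ = f := by
  funext x; simp [Phi]

lemma Phi_insert (f : V → M) (v : ι → V) {a : ι} {T : Finset ι} (ha : a ∉ T) :
    Phi f v (insert a T) = D (v a) (Phi f v T) := by
  funext x
  rw [Phi, Finset.sum_powerset_insert ha]
  have h1 : ∀ Q ∈ T.powerset, ((-1:ℤ)^((insert a T).card - Q.card)) • f (x + ∑ j ∈ Q, v j)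
      = -(((-1:ℤ)^(T.card - Q.card)) • f (x + ∑ j ∈ Q, v j)) := by
    intro Q hQ
    have hc : Q.card ≤ T.card := Finset.card_le_card (Finset.mem_powerset.mp hQ)
    rw [Finset.card_insert_of_notMem ha,
      show T.card + 1 - Q.card = (T.card - Q.card) + 1 by omega, pow_succ]
    simp
  have h2 : ∀ Q ∈ T.powerset,
      ((-1:ℤ)^((insert a T).card - (insert a Q).card)) • f (x + ∑ j ∈ insert a Q, v j)
      = ((-1:ℤ)^(T.card - Q.card)) • f ((x + v a) + ∑ j ∈ Q, v j) := by
    intro Q hQ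
    have haQ : a ∉ Q := fun hmem => ha (Finset.mem_powerset.mp hQ hmem)
    rw [Finset.card_insert_of_notMem ha, Finset.card_insert_of_notMem haQ,
      Finset.sum_insert haQ, Nat.succ_sub_succ]
    congr 1
    abel
  rw [Finset.sum_congr rfl h1, Finset.sum_congr rfl h2]
  simp only [D, Phi, Finset.sum_neg_distrib]
  abel

lemma Phi_toFinset_eq_foldr (f : V → M) (v : ι → V) :
    ∀ (l : List ι), l.Nodup → Phi f v l.toFinset = (l.map v).foldr D f := by
  intro l
  induction l with
  | nil => intro _; simp [Phi_empty]
  | cons a t ih =>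
    intro hnd
    rw [List.toFinset_cons, Phi_insert f v (by
      simp only [List.mem_toFinset]; exact (List.nodup_cons.mp hnd).1),
      ih (List.nodup_cons.mp hnd).2]
    rfl

lemma Phi_vanish {d : ℕ} {f : V → M} (hf : IsNCPoly d f) (v : ι → V) (T : Finset ι)
    (hT : d < T.card) : Phi f v T = 0 := by
  have h1 : Phi f v T = (T.toList.map v).foldr D f := by
    rw [← Phi_toFinset_eq_foldr f v T.toList T.nodup_toList, Finset.toList_toFinset]
  rw [h1]
  exact (hf.mono (by omega : d ≤ T.card - 1)) _
    (by simp only [List.length_map, Finset.length_toList]; omega)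

noncomputable def cOf (g : Finset ι → M) (T : Finset ι) : M :=
  ∑ Q ∈ T.powerset, ((-1 : ℤ)^(T.card - Q.card)) • g Q

lemma sum_union_powerset_sdiff (U S₀ : Finset ι) (hU : U ⊆ S₀) (F : Finset ι → M) :
    ∑ R ∈ (S₀ \ U).powerset, F (U ∪ R) = ∑ T ∈ S₀.powerset.filter (fun T => U ⊆ T), F T := by
  apply Finset.sum_bij' (fun R _ => U ∪ R) (fun T _ => T \ U)
  · intro R hR
    rw [Finset.mem_filter, Finset.mem_powerset]
    exact ⟨Finset.union_subset hU ((Finset.mem_powerset.mp hR).trans Finset.sdiff_subset),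
      Finset.subset_union_left⟩
  · intro T hT
    rw [Finset.mem_filter, Finset.mem_powerset] at hT
    rw [Finset.mem_powerset]
    exact Finset.sdiff_subset_sdiff hT.1 (le_refl U)
  · intro R hR
    have : Disjoint U R :=
      Finset.disjoint_of_subset_right (Finset.mem_powerset.mp hR) Finset.disjoint_sdiff
    exact Finset.union_sdiff_cancel_left this
  · intro T hT
    simp only [Finset.mem_filter] at hT
    exact Finset.union_sdiff_of_subset hT.2
  · intro R hR
    rfl

lemma moebius (g : Finset ι → M) (S : Finset ι) :
    g S = ∑ T ∈ S.powerset, cOf g T := by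
  have h1 : ∀ T ∈ S.powerset, cOf g T
      = ∑ Q ∈ S.powerset, if Q ⊆ T then ((-1:ℤ)^(T.card - Q.card)) • g Q else 0 := by
    intro T hT
    rw [cOf, ← Finset.sum_filter]
    congr 1
    ext Q
    simp only [Finset.mem_filter, Finset.mem_powerset]
    exact ⟨fun h => ⟨h.trans (Finset.mem_powerset.mp hT), h⟩, fun h => h.2⟩
  rw [Finset.sum_congr rfl h1, Finset.sum_comm]
  have h2 : ∀ Q ∈ S.powerset,
      (∑ T ∈ S.powerset, if Q ⊆ T then ((-1:ℤ)^(T.card - Q.card)) • g Q else 0)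
      = (if Q = S then (1:ℤ) else 0) • g Q := by
    intro Q hQ
    rw [← Finset.sum_filter, ← sum_union_powerset_sdiff Q S (Finset.mem_powerset.mp hQ)]
    have h3 : ∀ R ∈ (S \ Q).powerset, ((-1:ℤ)^((Q ∪ R).card - Q.card)) • g Q
        = ((-1:ℤ)^R.card) • g Q := by
      intro R hR
      have hdisj : Disjoint Q R :=
        Finset.disjoint_of_subset_right (Finset.mem_powerset.mp hR) Finset.disjoint_sdiff
      rw [Finset.card_union_of_disjoint hdisj, Nat.add_sub_cancel_left]
    rw [Finset.sum_congr rfl h3, ← Finset.sum_smul, Finset.sum_powerset_neg_one_pow_card]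
    congr 1
    simp only [Finset.sdiff_eq_empty_iff_subset]
    by_cases hqs : Q = S
    · simp [hqs]
    · have : ¬ (S ⊆ Q) := by
        intro hSQ
        exact hqs (Finset.Subset.antisymm (Finset.mem_powerset.mp hQ) hSQ)
      simp [hqs, this]
  rw [Finset.sum_congr rfl h2]
  have h4 : ∀ Q ∈ S.powerset, ((if Q = S then (1:ℤ) else 0) • g Q)
      = (if Q = S then g Q else 0) := by
    intro Q _
    by_cases h : Q = S <;> simp [h]
  rw [Finset.sum_congr rfl h4, Finset.sum_ite_eq' S.powerset S g]
  simp
end Moebius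

section Torus

lemma torus_coe_sum {α : Type*} (s : Finset α) (g : α → ℝ) :
    ((∑ i ∈ s, g i : ℝ) : AddCircle (1:ℝ)) = ∑ i ∈ s, ((g i : ℝ) : AddCircle (1:ℝ)) := by
  classical
  induction s using Finset.cons_induction with
  | empty => simp
  | cons a s ha ih => rw [Finset.sum_cons, Finset.sum_cons, AddCircle.coe_add, ih]

lemma torus_torsion {q : ℕ} (hq : 0 < q) (x : AddCircle (1:ℝ)) (hx : q • x = 0) :
    ∃ a : ℕ, x = (((a:ℝ)/(q:ℝ) : ℝ) : AddCircle (1:ℝ)) := by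
  obtain ⟨t, rfl⟩ := QuotientAddGroup.mk_surjective x
  have hco : (QuotientAddGroup.mk t : AddCircle (1:ℝ)) = ((t:ℝ) : AddCircle (1:ℝ)) := rfl
  rw [hco] at hx ⊢
  rw [← AddCircle.coe_nsmul, AddCircle.coe_eq_zero_iff] at hx
  obtain ⟨k, hk⟩ := hx
  have hq' : (q:ℝ) ≠ 0 := by positivity
  have hkq : (k:ℝ) = (q:ℝ) * t := by
    rw [zsmul_eq_mul, mul_one] at hk
    rw [hk, nsmul_eq_mul]
  have ht : t = (k:ℝ)/(q:ℝ) := by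
    rw [hkq, mul_div_cancel_left₀ _ hq']
  set j : ℤ := k / (q:ℤ) with hj
  set m : ℤ := k % (q:ℤ) with hm
  have hqz : (q:ℤ) ≠ 0 := by exact_mod_cast hq.ne'
  have hmnn : 0 ≤ m := Int.emod_nonneg k hqz
  have hdecomp : k = (q:ℤ) * j + m := (Int.mul_ediv_add_emod k (q:ℤ)).symm
  refine ⟨m.toNat, ?_⟩
  have h1 : t = (j:ℝ) + (m:ℝ)/(q:ℝ) := by
    rw [ht]
    have : (k:ℝ) = (q:ℝ)*(j:ℝ) + (m:ℝ) := by exact_mod_cast congrArg (Int.cast : ℤ → ℝ) hdecomp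
    rw [this]
    field_simp
  rw [h1, AddCircle.coe_add]
  have h2 : (((j:ℝ)) : AddCircle (1:ℝ)) = 0 := by
    rw [AddCircle.coe_eq_zero_iff]
    exact ⟨j, by simp⟩
  rw [h2, zero_add]
  have h3 : ((m.toNat : ℕ) : ℝ) = (m : ℝ) := by
    rw [show ((m.toNat : ℕ) : ℝ) = ((m.toNat : ℤ) : ℝ) by push_cast; ring,
      Int.toNat_of_nonneg hmnn]
  rw [h3]

lemma torus_div_eq_zero_iff {A q : ℕ} (hq : 0 < q) :
    ((((A:ℝ)/(q:ℝ)) : ℝ) : AddCircle (1:ℝ)) = 0 ↔ q ∣ A := by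
  have hq' : (q:ℝ) ≠ 0 := by positivity
  rw [AddCircle.coe_eq_zero_iff]
  constructor
  · rintro ⟨n, hn⟩
    rw [zsmul_eq_mul, mul_one] at hn
    have hA : (A:ℝ) = (n:ℝ) * q := by
      field_simp at hn
      linarith [hn]
    have hAZ : (A:ℤ) = n * (q:ℤ) := by exact_mod_cast hA
    have : (q:ℤ) ∣ (A:ℤ) := ⟨n, by linarith [hAZ]⟩
    exact_mod_cast this
  · rintro ⟨c, rfl⟩
    refine ⟨c, ?_⟩
    rw [zsmul_eq_mul, mul_one]
    push_cast
    field_simp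
end Torus

section LowDeg
variable {u : ℕ} {p : ℕ}

def monoF (p : ℕ) (U : Finset (Fin u)) : Finset (Fin u) → ZMod p :=
  fun S => if U ⊆ S then 1 else 0

def LowDeg (p : ℕ) (Dg : ℕ) (g : Finset (Fin u) → ZMod p) : Prop :=
  g ∈ Submodule.span (ZMod p)
    {h : Finset (Fin u) → ZMod p | ∃ U : Finset (Fin u), U.card ≤ Dg ∧ h = monoF p U}

lemma monoF_mul (U U' : Finset (Fin u)) : monoF p U * monoF p U' = monoF p (U ∪ U') := by
  funext S
  simp only [monoF, Pi.mul_apply]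
  by_cases h1 : U ⊆ S <;> by_cases h2 : U' ⊆ S <;>
    simp [h1, h2, Finset.union_subset_iff]

lemma LowDeg.le {D1 D2 : ℕ} {g : Finset (Fin u) → ZMod p} (h : LowDeg p D1 g) (hD : D1 ≤ D2) :
    LowDeg p D2 g := by
  refine Submodule.span_mono ?_ h
  rintro x ⟨U, hU, rfl⟩
  exact ⟨U, hU.trans hD, rfl⟩

lemma lowdeg_monoF {Dg : ℕ} {U : Finset (Fin u)} (h : U.card ≤ Dg) :
    LowDeg p Dg (monoF p U) := Submodule.subset_span ⟨U, h, rfl⟩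

lemma monoF_empty : monoF p (∅ : Finset (Fin u)) = 1 := by
  funext S; simp [monoF]

lemma lowdeg_const {Dg : ℕ} (c : ZMod p) : LowDeg p Dg (fun _ : Finset (Fin u) => c) := by
  have : (fun _ : Finset (Fin u) => c) = c • monoF p (∅ : Finset (Fin u)) := by
    funext S; simp [monoF]
  rw [this]
  exact Submodule.smul_mem _ _ (lowdeg_monoF (Nat.zero_le _))

lemma lowdeg_one {Dg : ℕ} : LowDeg p Dg (1 : Finset (Fin u) → ZMod p) := by
  rw [← monoF_empty]; exact lowdeg_monoF (Nat.zero_le _)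

lemma LowDeg.add {Dg : ℕ} {g1 g2 : Finset (Fin u) → ZMod p}
    (h1 : LowDeg p Dg g1) (h2 : LowDeg p Dg g2) : LowDeg p Dg (g1 + g2) :=
  Submodule.add_mem _ h1 h2

lemma LowDeg.sub {Dg : ℕ} {g1 g2 : Finset (Fin u) → ZMod p}
    (h1 : LowDeg p Dg g1) (h2 : LowDeg p Dg g2) : LowDeg p Dg (g1 - g2) :=
  Submodule.sub_mem _ h1 h2

lemma LowDeg.mul {D1 D2 : ℕ} {g1 g2 : Finset (Fin u) → ZMod p}
    (h1 : LowDeg p D1 g1) (h2 : LowDeg p D2 g2) : LowDeg p (D1 + D2) (g1 * g2) := by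
  have hm := Submodule.mul_mem_mul h1 h2
  rw [Submodule.span_mul_span] at hm
  refine Submodule.span_le.mpr ?_ hm
  rintro x hx
  obtain ⟨a, ha, b, hb, rfl⟩ := Set.mem_mul.mp hx
  obtain ⟨U, hU, rfl⟩ := ha
  obtain ⟨U', hU', rfl⟩ := hb
  rw [monoF_mul U U']
  exact Submodule.subset_span
    ⟨U ∪ U', le_trans (Finset.card_union_le U U') (by omega), rfl⟩

lemma LowDeg.pow {Dg : ℕ} {g : Finset (Fin u) → ZMod p} (h : LowDeg p Dg g) (n : ℕ) :
    LowDeg p (Dg * n) (g ^ n) := by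
  induction n with
  | zero => simpa using lowdeg_one
  | succ n ih =>
    have := ih.mul h
    rw [← pow_succ] at this
    exact this.le (by ring_nf; omega)

lemma lowdeg_sum {α : Type*} {Dg : ℕ} (s : Finset α) (g : α → Finset (Fin u) → ZMod p)
    (h : ∀ i ∈ s, LowDeg p Dg (g i)) : LowDeg p Dg (∑ i ∈ s, g i) :=
  Submodule.sum_mem _ h

lemma lowdeg_prod {α : Type*} (s : Finset α) (Dg : α → ℕ) (g : α → Finset (Fin u) → ZMod p)
    (h : ∀ i ∈ s, LowDeg p (Dg i) (g i)) : LowDeg p (∑ i ∈ s, Dg i) (∏ i ∈ s, g i) := by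
  classical
  induction s using Finset.cons_induction with
  | empty => simpa using lowdeg_one
  | cons a s ha ih =>
    rw [Finset.prod_cons, Finset.sum_cons]
    exact (h a (Finset.mem_cons_self a s)).mul
      (ih (fun i hi => h i (Finset.mem_cons.mpr (Or.inr hi))))

lemma lowdeg_cw_sum {Wd : Finset (Fin u)} {Dg : ℕ} (hD : Dg < Wd.card)
    {g : Finset (Fin u) → ZMod p} (hg : LowDeg p Dg g) :
    ∑ S ∈ Wd.powerset, (-1 : ZMod p)^S.card * g S = 0 := by
  induction hg using Submodule.span_induction with
  | mem x hx =>
    obtain ⟨U, hU, rfl⟩ := hx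
    simp only [monoF, mul_ite, mul_one, mul_zero]
    rw [← Finset.sum_filter]
    by_cases hUW : U ⊆ Wd
    · rw [← sum_union_powerset_sdiff U Wd hUW (fun T => (-1:ZMod p)^T.card)]
      have hne : (Wd \ U).Nonempty := by
        rw [← Finset.card_pos, Finset.card_sdiff_of_subset hUW]
        omega
      have hz : (∑ R ∈ (Wd \ U).powerset, (-1:ZMod p)^R.card) = 0 := by
        have hzz := Finset.sum_powerset_neg_one_pow_card_of_nonempty hne
        have := congrArg (Int.cast : ℤ → ZMod p) hzz
        push_cast at this
        simpa using this
      have hterm : ∀ R ∈ (Wd \ U).powerset,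
          (-1:ZMod p)^(U ∪ R).card = (-1:ZMod p)^U.card * (-1:ZMod p)^R.card := by
        intro R hR
        have hdisj : Disjoint U R :=
          Finset.disjoint_of_subset_right (Finset.mem_powerset.mp hR) Finset.disjoint_sdiff
        rw [Finset.card_union_of_disjoint hdisj, pow_add]
      rw [Finset.sum_congr rfl hterm, ← Finset.mul_sum, hz, mul_zero]
    · have : Wd.powerset.filter (fun S => U ⊆ S) = ∅ := by
        apply Finset.filter_false_of_mem
        intro S hS hUS
        exact hUW (hUS.trans (Finset.mem_powerset.mp hS))
      rw [this, Finset.sum_empty]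
  | zero => simp
  | add x y _ _ ihx ihy =>
    simp only [Pi.add_apply, mul_add, Finset.sum_add_distrib, ihx, ihy, add_zero]
  | smul c x _ ihx =>
    simp only [Pi.smul_apply, smul_eq_mul, mul_left_comm, ← Finset.mul_sum, ihx, mul_zero]
end LowDeg

section Lucas
variable {p : ℕ} [hp : Fact p.Prime]

lemma lucas_digit (κ n : ℕ) : ((n.choose (p^κ) : ℕ) : ZMod p) = ((n / p^κ : ℕ) : ZMod p) := by
  induction κ generalizing n with
  | zero => simp [Nat.choose_one_right]
  | succ κ ih =>
    have hl := Choose.choose_modEq_choose_mod_mul_choose_div (n := n) (k := p^(κ+1)) (p := p)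
    have hcast : ((n.choose (p^(κ+1)) : ℕ) : ZMod p)
        = ((((n % p).choose (p^(κ+1) % p) * ((n / p).choose (p^(κ+1) / p)) : ℕ)) : ZMod p) := by
      have h2 := (ZMod.intCast_eq_intCast_iff _ _ _).mpr hl
      push_cast at h2 ⊢
      exact_mod_cast h2
    have h1 : p^(κ+1) % p = 0 :=
      Nat.mod_eq_zero_of_dvd (dvd_pow_self p (Nat.succ_ne_zero κ))

    have h2 : p^(κ+1) / p = p^κ := by
      rw [pow_succ]; exact Nat.mul_div_cancel _ hp.out.pos
    rw [hcast, h1, h2, Nat.choose_zero_right, one_mul, ih (n / p),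
      Nat.div_div_eq_div_mul, ← pow_succ']

lemma pow_dvd_iff_forall_div (K n : ℕ) : p^K ∣ n ↔ ∀ κ < K, p ∣ (n / p^κ) := by
  induction K with
  | zero => simp
  | succ K ih =>
    constructor
    · intro h κ hκ
      have hk1 : p^(κ+1) ∣ n := dvd_trans (pow_dvd_pow p (by omega)) h
      have hk0 : p^κ ∣ n := dvd_trans (pow_dvd_pow p (by omega)) h
      rw [Nat.dvd_div_iff_mul_dvd hk0, ← pow_succ]
      exact hk1
    · intro h
      have hK : p^K ∣ n := ih.mpr (fun κ hκ => h κ (by omega))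
      have hlast : p ∣ n / p^K := h K (by omega)
      rw [Nat.dvd_div_iff_mul_dvd hK] at hlast
      rw [pow_succ]
      exact hlast

lemma pow_dvd_iff_choose_zero (K n : ℕ) :
    p^K ∣ n ↔ ∀ κ < K, ((n.choose (p^κ) : ℕ) : ZMod p) = 0 := by
  rw [pow_dvd_iff_forall_div]
  refine forall_congr' fun κ => imp_congr_right fun _ => ?_
  rw [lucas_digit, ZMod.natCast_eq_zero_iff]

lemma geom_aux (p d : ℕ) (hp1 : 1 ≤ p) : ∑ κ ∈ Finset.range d, (p - 1) * p^κ = p^d - 1 := by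
  induction d with
  | zero => simp
  | succ d ih =>
    rw [Finset.sum_range_succ, ih]
    have h2 : (p-1)*p^d = p^(d+1) - p^d := by
      rw [Nat.sub_mul, one_mul, ← pow_succ']
    have h3 : 0 < p^d := pow_pos (by omega) d
    have h4 : p^d ≤ p^(d+1) := Nat.pow_le_pow_right hp1 (Nat.le_succ d)
    omega
end Lucas

section Psi
variable {u : ℕ}

def psi (a : Finset (Fin u) → ℕ) (X : Finset (Fin u)) : ℕ := ∑ T ∈ X.powerset, a T

lemma psi_rep {d : ℕ} (a : Finset (Fin u) → ℕ)
    (had : ∀ T : Finset (Fin u), d < T.card → a T = 0) (X : Finset (Fin u)) :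
    psi a X = ∑ T ∈ (Finset.univ : Finset (Fin u)).powerset.filter (fun T => T.card ≤ d),
      a T * (if T ⊆ X then 1 else 0) := by
  classical
  have h1 : psi a X = ∑ T ∈ X.powerset.filter (fun T => T.card ≤ d), a T := by
    rw [psi, ← Finset.sum_filter_add_sum_filter_not X.powerset (fun T => T.card ≤ d) a]
    have hz : ∑ T ∈ X.powerset.filter (fun T => ¬ T.card ≤ d), a T = 0 :=
      Finset.sum_eq_zero (fun T hT => had T (by
        have := (Finset.mem_filter.mp hT).2; omega))
    rw [hz, add_zero]
  have h2 : X.powerset.filter (fun T => T.card ≤ d)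
      = ((Finset.univ : Finset (Fin u)).powerset.filter (fun T => T.card ≤ d)).filter
          (fun T => T ⊆ X) := by
    ext T
    simp only [Finset.mem_filter, Finset.mem_powerset, Finset.subset_univ, true_and]
    tauto
  rw [h1, h2, Finset.sum_filter]
  apply Finset.sum_congr rfl
  intro T _
  by_cases h : T ⊆ X <;> simp [h]

lemma vlem {p d : ℕ} [Fact p.Prime] (a : Finset (Fin u) → ℕ) (B : Finset (Fin u)) :
    ∀ (F : Finset (Finset (Fin u))), (∀ T ∈ F, (T \ B).card ≤ d) → ∀ e : ℕ,
    LowDeg p (d * e)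
      (fun S => (((∑ T ∈ F, a T * (if T ⊆ B ∪ S then 1 else 0)).choose e : ℕ) : ZMod p)) := by
  classical
  intro F
  induction F using Finset.induction_on with
  | empty =>
    intro _ e
    simp only [Finset.sum_empty]
    exact lowdeg_const _
  | @insert T₀ F hT₀ ih =>
    intro hF e
    have hfun : (fun S => (((∑ T ∈ insert T₀ F, a T * (if T ⊆ B ∪ S then 1 else 0)).choose e
          : ℕ) : ZMod p))
        = ∑ ij ∈ Finset.HasAntidiagonal.antidiagonal e,
            (fun S => (((a T₀ * (if T₀ ⊆ B ∪ S then 1 else 0)).choose ij.1 : ℕ) : ZMod p))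
            * (fun S => (((∑ T ∈ F, a T * (if T ⊆ B ∪ S then 1 else 0)).choose ij.2
                : ℕ) : ZMod p)) := by
      funext S
      rw [Finset.sum_apply]
      rw [Finset.sum_insert hT₀, Nat.add_choose_eq]
      push_cast
      apply Finset.sum_congr rfl
      intro ij _
      simp [Pi.mul_apply]
    rw [hfun]
    apply lowdeg_sum
    intro ij hij
    have hij' : ij.1 + ij.2 = e := Finset.HasAntidiagonal.mem_antidiagonal.mp hij
    rcases Nat.eq_zero_or_pos ij.1 with h0 | hpos
    · have hone : (fun S => (((a T₀ * (if T₀ ⊆ B ∪ S then 1 else 0)).choose ij.1 : ℕ)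
          : ZMod p)) = (1 : Finset (Fin u) → ZMod p) := by
        funext S; simp [h0]
      rw [hone, one_mul]
      refine (ih (fun T hT => hF T (Finset.mem_insert_of_mem hT)) ij.2).le ?_
      exact Nat.mul_le_mul_left d (by omega)
    · have hfac : (fun S => (((a T₀ * (if T₀ ⊆ B ∪ S then 1 else 0)).choose ij.1 : ℕ)
          : ZMod p)) = ((a T₀).choose ij.1 : ZMod p) • monoF p (T₀ \ B) := by
        funext S
        by_cases hsub : T₀ ⊆ B ∪ S
        · have hsub' : T₀ \ B ⊆ S := by
            intro t ht
            rcases Finset.mem_sdiff.mp ht with ⟨ht1, ht2⟩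
            rcases Finset.mem_union.mp (hsub ht1) with h | h
            · exact absurd h ht2
            · exact h
          simp [monoF, hsub, hsub']
        · have hsub' : ¬ (T₀ \ B ⊆ S) := by
            intro hc
            apply hsub
            intro t ht
            by_cases htB : t ∈ B
            · exact Finset.mem_union_left _ htB
            · exact Finset.mem_union_right _ (hc (Finset.mem_sdiff.mpr ⟨ht, htB⟩))
          obtain ⟨k, hk⟩ : ∃ k, ij.1 = k + 1 := ⟨ij.1 - 1, by omega⟩
          rw [hk]
          simp [monoF, hsub, hsub']
      rw [hfac]
      have hdeg1 : LowDeg p d (((a T₀).choose ij.1 : ZMod p) • monoF p (T₀ \ B)) :=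
        Submodule.smul_mem _ _ (lowdeg_monoF (hF T₀ (Finset.mem_insert_self T₀ F)))
      have hdeg2 := ih (fun T hT => hF T (Finset.mem_insert_of_mem hT)) ij.2
      refine (hdeg1.mul hdeg2).le ?_
      have : 1 + ij.2 ≤ e := by omega
      calc d + d * ij.2 = d * (1 + ij.2) := by ring
        _ ≤ d * e := Nat.mul_le_mul_left d this

lemma lowdeg_choose_psi {p d : ℕ} [Fact p.Prime] (a : Finset (Fin u) → ℕ)
    (had : ∀ T : Finset (Fin u), d < T.card → a T = 0) (B : Finset (Fin u)) (e : ℕ) :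
    LowDeg p (d * e) (fun S => (((psi a (B ∪ S)).choose e : ℕ) : ZMod p)) := by
  classical
  have hrep : (fun S => (((psi a (B ∪ S)).choose e : ℕ) : ZMod p))
      = (fun S => (((∑ T ∈ (Finset.univ : Finset (Fin u)).powerset.filter
          (fun T => T.card ≤ d), a T * (if T ⊆ B ∪ S then 1 else 0)).choose e : ℕ) : ZMod p)) := by
    funext S
    rw [psi_rep a had (B ∪ S)]
  rw [hrep]
  apply vlem
  intro T hT
  have := (Finset.mem_filter.mp hT).2
  calc (T \ B).card ≤ T.card := Finset.card_le_card Finset.sdiff_subset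
    _ ≤ d := this
end Psi

section CW
variable {u : ℕ}

lemma cw_window {p d : ℕ} [hp : Fact p.Prime] (a : Finset (Fin u) → ℕ)
    (had : ∀ T : Finset (Fin u), d < T.card → a T = 0)
    (Wd : Finset (Fin u)) (Bs : Finset (Finset (Fin u)))
    (hdeg : Bs.card * (d * (p^d - 1)) < Wd.card)
    (hbase : ∀ B ∈ Bs, p^d ∣ psi a B) :
    ∃ y : Finset (Fin u), y ⊆ Wd ∧ y.Nonempty ∧ ∀ B ∈ Bs, p^d ∣ psi a (B ∪ y) := by
  classical
  have hp2 := hp.out.two_le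
  set I : Finset (Fin u) → Finset (Fin u) → ZMod p := fun B =>
    ∏ κ ∈ Finset.range d,
      ((1 : Finset (Fin u) → ZMod p)
        - (fun S => (((psi a (B ∪ S)).choose (p^κ) : ℕ) : ZMod p))^(p-1)) with hI
  have hval : ∀ B S, I B S = if p^d ∣ psi a (B ∪ S) then 1 else 0 := by
    intro B S
    rw [hI]
    simp only [Finset.prod_apply, Pi.sub_apply, Pi.pow_apply, Pi.one_apply]
    by_cases hdvd : p^d ∣ psi a (B ∪ S)
    · rw [if_pos hdvd]
      apply Finset.prod_eq_one
      intro κ hκ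
      have h0 := (pow_dvd_iff_choose_zero d (psi a (B ∪ S))).mp hdvd κ (Finset.mem_range.mp hκ)
      rw [h0, zero_pow (by omega : p - 1 ≠ 0), sub_zero]
    · rw [if_neg hdvd]
      obtain ⟨κ, hκd, hκnz⟩ : ∃ κ, κ < d ∧ (((psi a (B ∪ S)).choose (p^κ) : ℕ) : ZMod p) ≠ 0 := by
        by_contra hc
        push_neg at hc
        exact hdvd ((pow_dvd_iff_choose_zero d _).mpr hc)
      apply Finset.prod_eq_zero (Finset.mem_range.mpr hκd)
      rw [ZMod.pow_card_sub_one_eq_one hκnz, sub_self]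
  have hdegI : ∀ B, LowDeg p (d * (p^d - 1)) (I B) := by
    intro B
    rw [hI]
    have hfac : ∀ κ ∈ Finset.range d, LowDeg p ((d * p^κ) * (p-1))
        ((1 : Finset (Fin u) → ZMod p)
          - (fun S => (((psi a (B ∪ S)).choose (p^κ) : ℕ) : ZMod p))^(p-1)) := by
      intro κ _
      exact (lowdeg_one.le (Nat.zero_le _)).sub ((lowdeg_choose_psi a had B (p^κ)).pow (p-1))
    have := lowdeg_prod (Finset.range d) _ _ hfac
    refine this.le (le_of_eq ?_)
    have h1 : ∀ κ, (d * p^κ) * (p-1) = d * ((p-1) * p^κ) := by intro κ; ring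
    simp_rw [h1]
    rw [← Finset.mul_sum, geom_aux p d (by omega)]
  set Tot : Finset (Fin u) → ZMod p := ∏ B ∈ Bs, I B with hTot
  have hvalTot : ∀ S, Tot S = if (∀ B ∈ Bs, p^d ∣ psi a (B ∪ S)) then 1 else 0 := by
    intro S
    rw [hTot]
    simp only [Finset.prod_apply]
    by_cases hall : ∀ B ∈ Bs, p^d ∣ psi a (B ∪ S)
    · rw [if_pos hall]
      apply Finset.prod_eq_one
      intro B hB
      rw [hval B S, if_pos (hall B hB)]
    · rw [if_neg hall]
      push_neg at hall
      obtain ⟨B₀, hB₀, hbad⟩ := hall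
      apply Finset.prod_eq_zero hB₀
      rw [hval B₀ S, if_neg hbad]
  have hdegTot : LowDeg p (Bs.card * (d * (p^d - 1))) Tot := by
    rw [hTot]
    have := lowdeg_prod Bs (fun _ => d * (p^d - 1)) I (fun B _ => hdegI B)
    refine this.le (le_of_eq ?_)
    rw [Finset.sum_const, smul_eq_mul]
  have hcw := lowdeg_cw_sum hdeg hdegTot
  have hacc : ∑ S ∈ Wd.powerset.filter (fun S => ∀ B ∈ Bs, p^d ∣ psi a (B ∪ S)),
      (-1 : ZMod p)^S.card = 0 := by
    rw [Finset.sum_filter]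
    have hcong : ∀ S ∈ Wd.powerset,
        (if (∀ B ∈ Bs, p^d ∣ psi a (B ∪ S)) then (-1 : ZMod p)^S.card else 0)
        = (-1 : ZMod p)^S.card * Tot S := by
      intro S _
      rw [hvalTot S]
      by_cases h : ∀ B ∈ Bs, p^d ∣ psi a (B ∪ S) <;> simp [h]
    rw [Finset.sum_congr rfl hcong, hcw]
  by_contra hno
  push_neg at hno
  have hAcc : Wd.powerset.filter (fun S => ∀ B ∈ Bs, p^d ∣ psi a (B ∪ S)) = {∅} := by
    apply Finset.eq_singleton_iff_unique_mem.mpr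
    constructor
    · rw [Finset.mem_filter]
      refine ⟨Finset.empty_mem_powerset Wd, fun B hB => ?_⟩
      rw [Finset.union_empty]
      exact hbase B hB
    · intro S hS
      rw [Finset.mem_filter, Finset.mem_powerset] at hS
      by_contra hSne
      have hSn : S.Nonempty := Finset.nonempty_iff_ne_empty.mpr hSne
      obtain ⟨B, hB, hnd⟩ := hno S hS.1 hSn
      exact hnd (hS.2 B hB)
  rw [hAcc] at hacc
  simp only [Finset.sum_singleton, Finset.card_empty, pow_zero] at hacc
  exact one_ne_zero hacc
end CW

section Count
lemma card_powerset_filter_le {α : Type*} [DecidableEq α] (s : Finset α) (e : ℕ) :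
    (s.powerset.filter (fun K => K.card ≤ e)).card ≤ (s.card + 1)^e := by
  induction e with
  | zero =>
    have h1 : s.powerset.filter (fun K => K.card ≤ 0) = {∅} := by
      ext K
      simp only [Finset.mem_filter, Finset.mem_powerset, Nat.le_zero, Finset.card_eq_zero,
        Finset.mem_singleton]
      constructor
      · rintro ⟨_, h⟩; exact h
      · rintro rfl; exact ⟨Finset.empty_subset s, rfl⟩
    rw [h1]; simp
  | succ e ih =>
    have hsplit : s.powerset.filter (fun K => K.card ≤ e+1)
        ⊆ s.powerset.filter (fun K => K.card ≤ e) ∪ Finset.powersetCard (e+1) s := by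
      intro K hK
      rw [Finset.mem_union]
      rw [Finset.mem_filter] at hK
      by_cases h : K.card ≤ e
      · exact Or.inl (Finset.mem_filter.mpr ⟨hK.1, h⟩)
      · refine Or.inr ?_
        rw [Finset.mem_powersetCard]
        exact ⟨Finset.mem_powerset.mp hK.1, by omega⟩
    calc (s.powerset.filter (fun K => K.card ≤ e+1)).card
        ≤ (s.powerset.filter (fun K => K.card ≤ e) ∪ Finset.powersetCard (e+1) s).card :=
          Finset.card_le_card hsplit
      _ ≤ (s.powerset.filter (fun K => K.card ≤ e)).card + (Finset.powersetCard (e+1) s).card :=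
          Finset.card_union_le _ _
      _ ≤ (s.card + 1)^e + s.card.choose (e+1) := by
          rw [Finset.card_powersetCard]
          exact Nat.add_le_add_right ih _
      _ ≤ (s.card + 1)^e + s.card^(e+1) := Nat.add_le_add_left (Nat.choose_le_pow _ _) _
      _ ≤ (s.card + 1)^(e+1) := by
          have h2 : s.card^(e+1) ≤ s.card * (s.card+1)^e := by
            rw [pow_succ']
            exact Nat.mul_le_mul_left _ (Nat.pow_le_pow_left (by omega) e)
          have h3 : (s.card + 1)^(e+1) = (s.card+1)^e + s.card * (s.card+1)^e := by ring
          omega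
end Count

section Vec

def vec (p : ℕ) {nn : ℕ} (X : Finset (Fin nn)) : Fin nn → ZMod p :=
  fun t => if t ∈ X then 1 else 0

variable {p nn : ℕ}

lemma vec_empty : vec p (∅ : Finset (Fin nn)) = (fun _ => 0) := by
  funext t; simp [vec]

lemma vec_union {A B : Finset (Fin nn)} (h : Disjoint A B) :
    vec p (A ∪ B) = vec p A + vec p B := by
  funext t
  simp only [vec, Pi.add_apply, Finset.mem_union]
  by_cases hA : t ∈ A
  · have hB : t ∉ B := Finset.disjoint_left.mp h hA
    simp [hA, hB]
  · by_cases hB : t ∈ B <;> simp [hA, hB]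

lemma vec_disjUnion {ι : Type*} [DecidableEq ι] (E : ι → Finset (Fin nn)) :
    ∀ (Q : Finset ι), (∀ i ∈ Q, ∀ j ∈ Q, i ≠ j → Disjoint (E i) (E j)) →
    vec p (Q.biUnion E) = ∑ j ∈ Q, vec p (E j) := by
  intro Q
  induction Q using Finset.induction_on with
  | empty => intro _; simp [vec_empty]; rfl
  | @insert a Q ha ih =>
    intro hdisj
    rw [Finset.biUnion_insert, Finset.sum_insert ha]
    have hd : Disjoint (E a) (Q.biUnion E) := by
      rw [Finset.disjoint_biUnion_right]
      intro i hi
      exact hdisj a (Finset.mem_insert_self a Q) i (Finset.mem_insert_of_mem hi)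
        (fun h => ha (h ▸ hi))
    rw [vec_union hd, ih (fun i hi j hj hij =>
      hdisj i (Finset.mem_insert_of_mem hi) j (Finset.mem_insert_of_mem hj) hij)]

lemma biUnion_disjoint_of_disjoint {ι : Type*} [DecidableEq ι] {S : ι → Finset (Fin nn)}
    (hS : ∀ i j, i ≠ j → Disjoint (S i) (S j)) {u' : Type*} [DecidableEq u']
    {A B : Finset ι} (h : Disjoint A B) :
    Disjoint (A.biUnion S) (B.biUnion S) := by
  rw [Finset.disjoint_biUnion_left]
  intro i hi
  rw [Finset.disjoint_biUnion_right]
  intro j hj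
  refine hS i j (fun hij => ?_)
  exact Finset.disjoint_left.mp h hi (hij ▸ hj)
end Vec

section PrimeStep
variable {nn : ℕ}

lemma prime_step {p d u m : ℕ} [hp : Fact p.Prime]
    (f : (Fin nn → ZMod p) → AddCircle (1:ℝ)) (hf : IsNCPoly d f)
    (hf0 : f (fun _ => 0) = 0)
    (S : Fin u → Finset (Fin nn)) (hSdisj : ∀ i j, i ≠ j → Disjoint (S i) (S j))
    (hu : m * ((m+1)^(d-1) * (d * p^d) + 1) ≤ u) :
    ∃ T : Fin m → Finset (Fin u), (∀ l, (T l).Nonempty) ∧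
      (∀ l l', l ≠ l' → Disjoint (T l) (T l')) ∧
      ∀ K : Finset (Fin m), f (vec p ((K.biUnion T).biUnion S)) = 0 := by
  classical
  have hp2 := hp.out.two_le
  have hq : 0 < p^d := pow_pos (by omega) d
  have hpV : ∀ v : Fin nn → ZMod p, p • v = 0 := by
    intro v; funext t
    simp only [Pi.smul_apply, Pi.zero_apply, nsmul_eq_mul]
    rw [ZMod.natCast_self, zero_mul]
  have hf0' : f 0 = 0 := hf0
  set val : Finset (Fin u) → AddCircle (1:ℝ) := fun J => f (vec p (J.biUnion S)) with hval
  have val_empty : val ∅ = 0 := by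
    rw [hval]
    simp only [Finset.biUnion_empty, vec_empty]
    exact hf0
  have val_torsion : ∀ J, (p^d : ℕ) • val J = 0 := by
    intro J
    exact depth_val p (by omega) hpV d f hf hf0' _
  set c : Finset (Fin u) → AddCircle (1:ℝ) := cOf val with hc
  have c_phi : ∀ T : Finset (Fin u), c T = Phi f (fun j => vec p (S j)) T 0 := by
    intro T
    rw [hc, cOf, Phi]
    apply Finset.sum_congr rfl
    intro Q hQ
    have h1 : val Q = f (0 + ∑ j ∈ Q, vec p (S j)) := by
      rw [zero_add, hval]
      show f (vec p (Q.biUnion S)) = _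
      rw [vec_disjUnion S Q (fun i _ j _ hij => hSdisj i j hij)]
    rw [h1]
  have c_vanish : ∀ T : Finset (Fin u), d < T.card → c T = 0 := by
    intro T hT
    rw [c_phi T, Phi_vanish hf _ T hT]
    rfl
  have c_torsion : ∀ T, (p^d : ℕ) • c T = 0 := by
    intro T
    rw [hc, cOf, Finset.smul_sum]
    apply Finset.sum_eq_zero
    intro Q _
    rw [← natCast_zsmul, ← mul_zsmul, mul_comm, mul_zsmul, natCast_zsmul,
      val_torsion Q, smul_zero]
  have hex : ∀ T : Finset (Fin u), ∃ aT : ℕ,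
      c T = (((aT:ℝ)/((p^d : ℕ):ℝ) : ℝ) : AddCircle (1:ℝ)) :=
    fun T => torus_torsion hq _ (c_torsion T)
  set A : Finset (Fin u) → ℕ := fun T => if d < T.card then 0 else Classical.choose (hex T)
    with hA
  have hAval : ∀ T, c T = (((A T : ℝ)/((p^d : ℕ):ℝ) : ℝ) : AddCircle (1:ℝ)) := by
    intro T
    by_cases hT : d < T.card
    · rw [hA]
      simp only [if_pos hT]
      rw [c_vanish T hT]
      norm_num
    · rw [hA]
      simp only [if_neg hT]
      exact Classical.choose_spec (hex T)
  have hAd : ∀ T, d < T.card → A T = 0 := by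
    intro T hT; rw [hA]; simp [if_pos hT]
  have val_psi : ∀ J, val J = (((psi A J : ℝ)/((p^d : ℕ):ℝ) : ℝ) : AddCircle (1:ℝ)) := by
    intro J
    rw [show val J = ∑ T ∈ J.powerset, c T from moebius val J]
    rw [Finset.sum_congr rfl (fun T _ => hAval T), ← torus_coe_sum]
    congr 1
    rw [psi, ← Finset.sum_div]
    congr 1
    push_cast
    rfl
  have val_zero_iff : ∀ J, val J = 0 ↔ p^d ∣ psi A J := by
    intro J
    rw [val_psi J]
    exact torus_div_eq_zero_iff hq
  -- propagation
  have prop : ∀ (E : ℕ → Finset (Fin u)) (k : ℕ),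
      (∀ i, i < k → ∀ j, j < k → i ≠ j → Disjoint (E i) (E j)) →
      (∀ K : Finset ℕ, K ⊆ Finset.range k → K.card ≤ d → val (K.biUnion E) = 0) →
      ∀ K : Finset ℕ, K ⊆ Finset.range k → val (K.biUnion E) = 0 := by
    intro E k hEdisj hsmall K hK
    have hmoe : val (K.biUnion E) = ∑ T ∈ K.powerset, cOf (fun K' => val (K'.biUnion E)) T :=
      moebius (fun K' => val (K'.biUnion E)) K
    rw [hmoe]
    apply Finset.sum_eq_zero
    intro T hT
    have hTk : T ⊆ Finset.range k := (Finset.mem_powerset.mp hT).trans hK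
    by_cases hTd : d < T.card
    · have hcc : cOf (fun K' => val (K'.biUnion E)) T
          = Phi f (fun i => vec p ((E i).biUnion S)) T 0 := by
        rw [cOf, Phi]
        apply Finset.sum_congr rfl
        intro Q hQ
        have hassoc : (Q.biUnion E).biUnion S = Q.biUnion (fun i => (E i).biUnion S) :=
          Finset.biUnion_biUnion Q E S
        have hd : ∀ i ∈ Q, ∀ j ∈ Q, i ≠ j →
            Disjoint ((E i).biUnion S) ((E j).biUnion S) := by
          intro i hi j hj hij
          have hiK : i < k := by
            have := (Finset.mem_powerset.mp hQ).trans hTk hi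
            simpa using this
          have hjK : j < k := by
            have := (Finset.mem_powerset.mp hQ).trans hTk hj
            simpa using this
          exact biUnion_disjoint_of_disjoint hSdisj (u' := ℕ) (hEdisj i hiK j hjK hij)
        have h1 : val (Q.biUnion E) = f (0 + ∑ j ∈ Q, vec p ((E j).biUnion S)) := by
          rw [zero_add, hval]
          show f (vec p ((Q.biUnion E).biUnion S)) = _
          rw [hassoc, vec_disjUnion (fun i => (E i).biUnion S) Q hd]
        rw [h1]
      rw [hcc, Phi_vanish hf _ T hTd]
      rfl
    · rw [cOf]
      apply Finset.sum_eq_zero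
      intro Q hQ
      rw [hsmall Q ((Finset.mem_powerset.mp hQ).trans hTk)
        (le_trans (Finset.card_le_card (Finset.mem_powerset.mp hQ)) (by omega)), smul_zero]
  set W := (m+1)^(d-1) * (d * p^d) + 1 with hW
  have greedy : ∀ (t jj : ℕ) (B : ℕ → Finset (Fin u)) (G : Finset (Fin u)),
      jj + t ≤ m → t * W ≤ G.card →
      (∀ i, i < jj → (B i).Nonempty) →
      (∀ i, i < jj → ∀ j, j < jj → i ≠ j → Disjoint (B i) (B j)) →
      (∀ i, i < jj → Disjoint (B i) G) →
      (∀ K : Finset ℕ, K ⊆ Finset.range jj → val (K.biUnion B) = 0) →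
      ∃ B' : ℕ → Finset (Fin u),
        (∀ i, i < jj → B' i = B i) ∧
        (∀ i, i < jj + t → (B' i).Nonempty) ∧
        (∀ i, i < jj + t → ∀ j, j < jj + t → i ≠ j → Disjoint (B' i) (B' j)) ∧
        (∀ i, jj ≤ i → i < jj + t → B' i ⊆ G) ∧
        (∀ K : Finset ℕ, K ⊆ Finset.range (jj + t) → val (K.biUnion B') = 0) := by
    intro t
    induction t with
    | zero =>
      intro jj B G hjm hG h1 h2 h3 h4
      exact ⟨B, fun i _ => rfl, fun i hi => h1 i (by omega),
        fun i hi j hj hij => h2 i (by omega) j (by omega) hij,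
        fun i hi1 hi2 => absurd hi2 (by omega), fun K hK => h4 K (by simpa using hK)⟩
    | succ t ih =>
      intro jj B G hjm hG h1 h2 h3 h4
      have hWG : W ≤ G.card := by
        have hmul : (t+1) * W = t*W + W := by ring
        omega
      obtain ⟨Wd, hWdG, hWdcard⟩ := Finset.exists_subset_card_eq hWG
      set Bs : Finset (Finset (Fin u)) :=
        ((Finset.range jj).powerset.filter (fun K => K.card ≤ d - 1)).image
          (fun K => K.biUnion B) with hBs
      have hBscard : Bs.card ≤ (m+1)^(d-1) := by
        refine le_trans Finset.card_image_le (le_trans (card_powerset_filter_le _ _) ?_)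
        rw [Finset.card_range]
        exact Nat.pow_le_pow_left (by omega) _
      have hdeg : Bs.card * (d * (p^d - 1)) < Wd.card := by
        rw [hWdcard, hW]
        have hle : Bs.card * (d * (p^d - 1)) ≤ (m+1)^(d-1) * (d * p^d) :=
          Nat.mul_le_mul hBscard (Nat.mul_le_mul_left d (by omega))
        omega
      have hbase : ∀ Bb ∈ Bs, p^d ∣ psi A Bb := by
        intro Bb hBb
        rw [hBs] at hBb
        obtain ⟨K, hKmem, rfl⟩ := Finset.mem_image.mp hBb
        rw [← val_zero_iff]
        exact h4 K (Finset.mem_powerset.mp (Finset.mem_filter.mp hKmem).1)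
      obtain ⟨y, hyW, hyne, hy⟩ := cw_window A hAd Wd Bs hdeg hbase
      set B' : ℕ → Finset (Fin u) := fun i => if i = jj then y else B i with hB'
      have hB'lt : ∀ i, i < jj → B' i = B i := by
        intro i hi; rw [hB']; simp [Nat.ne_of_lt hi]
      have hB'jj : B' jj = y := by rw [hB']; simp
      have hbiu : ∀ K : Finset ℕ, K ⊆ Finset.range jj → K.biUnion B' = K.biUnion B := by
        intro K hK
        apply Finset.biUnion_congr rfl
        intro i hi
        exact hB'lt i (by simpa using hK hi)
      have hne' : ∀ i, i < jj + 1 → (B' i).Nonempty := by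
        intro i hi
        rcases Nat.lt_succ_iff_lt_or_eq.mp hi with h | h
        · rw [hB'lt i h]; exact h1 i h
        · rw [h, hB'jj]; exact hyne
      have hyG : y ⊆ G := hyW.trans hWdG
      have hdisj' : ∀ i, i < jj+1 → ∀ j, j < jj+1 → i ≠ j → Disjoint (B' i) (B' j) := by
        intro i hi j hj hij
        rcases Nat.lt_succ_iff_lt_or_eq.mp hi with h | h <;>
          rcases Nat.lt_succ_iff_lt_or_eq.mp hj with h' | h'
        · rw [hB'lt i h, hB'lt j h']; exact h2 i h j h' hij
        · rw [hB'lt i h, h', hB'jj]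
          exact Finset.disjoint_of_subset_right hyG (h3 i h)
        · rw [hB'lt j h', h, hB'jj]
          exact (Finset.disjoint_of_subset_right hyG (h3 j h')).symm
        · exact absurd (h.trans h'.symm) hij
      have hinv1 : ∀ K : Finset ℕ, K ⊆ Finset.range (jj+1) → val (K.biUnion B') = 0 := by
        apply prop B' (jj+1) hdisj'
        intro K hK hKd
        by_cases hjK : jj ∈ K
        · set K' := K.erase jj with hK'
          have hK'r : K' ⊆ Finset.range jj := by
            intro i hi
            rw [hK'] at hi
            have hine := Finset.ne_of_mem_erase hi
            have hmem := hK (Finset.mem_of_mem_erase hi)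
            rw [Finset.mem_range] at *
            omega
          have hKb : K.biUnion B' = (K'.biUnion B) ∪ y := by
            have hKi : K = insert jj K' := (Finset.insert_erase hjK).symm
            rw [hKi]
            rw [Finset.biUnion_insert]
            have hjrw : K'.biUnion B' = K'.biUnion B := by
              apply Finset.biUnion_congr rfl
              intro i hi
              have : i < jj := by
                have := hK'r hi; simpa using this
              exact hB'lt i this
            rw [hB'jj, hjrw, Finset.union_comm]
          rw [hKb, val_zero_iff]
          apply hy
          rw [hBs]
          apply Finset.mem_image.mpr
          refine ⟨K', Finset.mem_filter.mpr ⟨Finset.mem_powerset.mpr hK'r, ?_⟩, rfl⟩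
          have hcard : K.card = K'.card + 1 := by
            rw [hK', Finset.card_erase_of_mem hjK]
            have h1c : 1 ≤ K.card := Finset.card_pos.mpr ⟨jj, hjK⟩
            omega
          omega
        · have hKr : K ⊆ Finset.range jj := by
            intro i hi
            have hmem := hK hi
            rw [Finset.mem_range] at *
            rcases Nat.lt_succ_iff_lt_or_eq.mp hmem with h | h
            · exact h
            · exact absurd (h ▸ hi) hjK
          rw [hbiu K hKr]
          exact h4 K hKr
      have hG' : t * W ≤ (G \ Wd).card := by
        rw [Finset.card_sdiff_of_subset hWdG, hWdcard]
        have hmul : (t+1) * W = t*W + W := by ring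
        omega
      have hG'disj : ∀ i, i < jj+1 → Disjoint (B' i) (G \ Wd) := by
        intro i hi
        rcases Nat.lt_succ_iff_lt_or_eq.mp hi with h | h
        · rw [hB'lt i h]
          exact Finset.disjoint_of_subset_right Finset.sdiff_subset (h3 i h)
        · rw [h, hB'jj]
          exact Finset.disjoint_of_subset_left hyW Finset.disjoint_sdiff
      obtain ⟨B'', hagree, hne'', hdisj'', hsub'', hinv''⟩ :=
        ih (jj+1) B' (G \ Wd) (by omega) hG' hne' hdisj' hG'disj hinv1
      refine ⟨B'', ?_, ?_, ?_, ?_, ?_⟩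
      · intro i hi
        rw [hagree i (by omega), hB'lt i hi]
      · intro i hi; exact hne'' i (by omega)
      · intro i hi j hj hij; exact hdisj'' i (by omega) j (by omega) hij
      · intro i hi1 hi2
        rcases Nat.eq_or_lt_of_le hi1 with h | h
        · rw [← h, hagree jj (by omega), hB'jj]
          exact hyG
        · exact (hsub'' i (by omega) (by omega)).trans Finset.sdiff_subset
      · intro K hK
        apply hinv'' K
        intro i hi
        have := hK hi
        rw [Finset.mem_range] at *
        omega
  obtain ⟨B', _, hne, hdisj, _, hinv⟩ := greedy m 0 (fun _ => ∅) Finset.univ (by omega)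
    (by
      rw [Finset.card_univ, Fintype.card_fin]
      simpa using hu)
    (fun i hi => absurd hi (by omega))
    (fun i hi => absurd hi (by omega))
    (fun i hi => absurd hi (by omega))
    (by
      intro K hK
      have hKe : K = ∅ := Finset.subset_empty.mp (by simpa using hK)
      rw [hKe, Finset.biUnion_empty]
      exact val_empty)
  refine ⟨fun l => B' l.val, fun l => hne l.val (by omega), ?_, ?_⟩
  · intro l l' hll
    refine hdisj l.val (by omega) l'.val (by omega) ?_
    exact fun h => hll (Fin.val_injective h)
  · intro K
    have h1 : K.biUnion (fun l => B' l.val) = (K.image Fin.val).biUnion B' :=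
      (Finset.image_biUnion).symm
    have h2 : K.image Fin.val ⊆ Finset.range (0 + m) := by
      intro i hi
      obtain ⟨l, _, rfl⟩ := Finset.mem_image.mp hi
      rw [Finset.mem_range]
      omega
    have h3 := hinv (K.image Fin.val) h2
    rw [hval] at h3
    rw [← h1] at h3
    exact h3

end PrimeStep

section Outer

def NN (d pm : ℕ) : ℕ → ℕ
  | 0 => 1
  | (k+1) => NN d pm k * ((NN d pm k + 1)^(d-1) * (d * pm^d) + 1)

def EE (d : ℕ) : ℕ → ℕ
  | 0 => 0
  | (k+1) => 1 + d * EE d k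

lemma NN_pos (d pm : ℕ) : ∀ k, 0 < NN d pm k := by
  intro k
  induction k with
  | zero => exact Nat.one_pos
  | succ k ih =>
    show 0 < NN d pm k * ((NN d pm k + 1)^(d-1) * (d * pm^d) + 1)
    exact Nat.mul_pos ih (Nat.succ_pos _)

lemma NN_bound (d pm : ℕ) (hpm : 2 ≤ pm) (hd : 1 ≤ d) :
    ∀ k, NN d pm k + 1 ≤ (2 * d * pm^d) ^ (EE d k) * 2 ^ (d ^ k) := by
  set A := 2 * d * pm^d with hA
  have hA1 : 1 ≤ A := by
    have : 1 ≤ pm^d := Nat.one_le_pow _ _ (by omega)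
    calc 1 ≤ 2 * d * 1 := by omega
      _ ≤ A := by rw [hA]; exact Nat.mul_le_mul_left _ this
  intro k
  induction k with
  | zero =>
    simp [NN, EE]
  | succ k ih =>
    set ν := NN d pm k + 1 with hν
    have hν1 : 1 ≤ ν := by omega
    have hstep : NN d pm (k+1) + 1 ≤ A * ν^d := by
      have h1 : NN d pm k * (ν^(d-1) * (d * pm^d)) ≤ ν^d * (d * pm^d) := by
        have : NN d pm k * ν^(d-1) ≤ ν * ν^(d-1) := Nat.mul_le_mul_right _ (by omega)
        calc NN d pm k * (ν^(d-1) * (d * pm^d)) = (NN d pm k * ν^(d-1)) * (d * pm^d) := by ring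
          _ ≤ (ν * ν^(d-1)) * (d * pm^d) := Nat.mul_le_mul_right _ this
          _ = ν^d * (d * pm^d) := by
              congr 1
              rw [← pow_succ']
              congr 1
              omega
      have h2 : ν ≤ ν^d := Nat.le_self_pow (by omega) ν
      have h3 : NN d pm (k+1) + 1 = NN d pm k * (ν^(d-1) * (d * pm^d)) + ν := by
        show NN d pm k * (ν^(d-1) * (d * pm^d) + 1) + 1 = _
        rw [hν]
        ring
      have h4 : 1 ≤ d * pm^d := by
        have : 1 ≤ pm^d := Nat.one_le_pow _ _ (by omega)
        calc 1 ≤ d * 1 := by omega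
          _ ≤ d * pm^d := Nat.mul_le_mul_left _ this
      calc NN d pm (k+1) + 1 = NN d pm k * (ν^(d-1) * (d * pm^d)) + ν := h3
        _ ≤ ν^d * (d * pm^d) + ν^d := by omega
        _ = ν^d * (d * pm^d + 1) := by ring
        _ ≤ ν^d * A := by
            have hAeq : A = 2*(d*pm^d) := by rw [hA]; ring
            have hle2 : d * pm^d + 1 ≤ A := by omega
            exact Nat.mul_le_mul_left _ hle2
        _ = A * ν^d := by ring
    calc NN d pm (k+1) + 1 ≤ A * ν^d := hstep
      _ ≤ A * ((A ^ (EE d k) * 2 ^ (d ^ k)))^d := by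
          apply Nat.mul_le_mul_left
          exact Nat.pow_le_pow_left ih d
      _ = A ^ (EE d (k+1)) * 2 ^ (d ^ (k+1)) := by
          rw [mul_pow, ← pow_mul, ← pow_mul]
          show A * (A ^ (EE d k * d) * 2 ^ (d ^ k * d)) = A ^ (1 + d * EE d k) * 2 ^ (d ^ (k+1))
          rw [pow_add, pow_one, pow_succ]
          ring_nf
  
lemma EE_bound (d : ℕ) (hd : 1 ≤ d) :
    ∀ r, 1 ≤ r → EE d r * (d + Nat.log 2 d + 2) + d^r ≤ 4 * (d+1)^r := by
  have hL : Nat.log 2 d ≤ d := Nat.log_le_self 2 d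
  intro r hr
  induction r, hr using Nat.le_induction with
  | base =>
    show (1 + d * 0) * (d + Nat.log 2 d + 2) + d^1 ≤ 4 * (d+1)^1
    simp only [Nat.mul_zero, Nat.add_zero, one_mul, pow_one]
    omega
  | succ r hr ih =>
    have hpow : (d+1) ≤ (d+1)^r := Nat.le_self_pow (by omega) _
    show (1 + d * EE d r) * (d + Nat.log 2 d + 2) + d^(r+1) ≤ 4 * (d+1)^(r+1)
    have expand : (1 + d * EE d r) * (d + Nat.log 2 d + 2) + d^(r+1)
        = (d + Nat.log 2 d + 2) + d * (EE d r * (d + Nat.log 2 d + 2) + d^r) := by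
      rw [pow_succ]
      ring
    rw [expand]
    have h1 : d * (EE d r * (d + Nat.log 2 d + 2) + d^r) ≤ d * (4 * (d+1)^r) :=
      Nat.mul_le_mul_left d ih
    have h2 : (d + Nat.log 2 d + 2) ≤ 4 * (d+1)^r := by
      have : d + Nat.log 2 d + 2 ≤ 4 * (d+1) := by omega
      calc d + Nat.log 2 d + 2 ≤ 4 * (d+1) := this
        _ ≤ 4 * (d+1)^r := Nat.mul_le_mul_left 4 hpow
    have h3 : 4 * (d+1)^(r+1) = 4 * (d+1)^r + d * (4 * (d+1)^r) := by
      rw [pow_succ]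
      ring
    omega

lemma NN_le_pow (d pm r : ℕ) (hpm : 2 ≤ pm) (hr : 1 ≤ r) :
    NN d pm r ≤ pm ^ (4 * (d+1)^r) := by
  rcases Nat.eq_zero_or_pos d with hd0 | hd1
  · subst hd0
    have hNN : ∀ k, NN 0 pm k = 1 := by
      intro k
      induction k with
      | zero => rfl
      | succ k ih => simp [NN, ih]
    rw [hNN r]
    exact Nat.one_le_pow _ _ (by omega)
  · set L := Nat.log 2 d with hLdef
    have hA : 2 * d * pm^d ≤ pm ^ (L + 2 + d) := by
      have hd2 : d < 2^(L+1) := Nat.lt_pow_succ_log_self (by norm_num) d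
      have h2d : 2 * d ≤ 2^(L+2) := by
        have : 2^(L+2) = 2 * 2^(L+1) := by ring
        omega
      calc 2 * d * pm^d ≤ 2^(L+2) * pm^d := Nat.mul_le_mul_right _ h2d
        _ ≤ pm^(L+2) * pm^d := Nat.mul_le_mul_right _ (Nat.pow_le_pow_left hpm _)
        _ = pm ^ (L + 2 + d) := by rw [← pow_add]
    have h1 : NN d pm r ≤ (2*d*pm^d) ^ (EE d r) * 2 ^ (d^r) := by
      have := NN_bound d pm hpm hd1 r
      omega
    have h2 : (2*d*pm^d) ^ (EE d r) * 2 ^ (d^r)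
        ≤ pm ^ ((L+2+d) * EE d r) * pm ^ (d^r) := by
      apply Nat.mul_le_mul
      · calc (2*d*pm^d) ^ (EE d r) ≤ (pm ^ (L+2+d)) ^ (EE d r) := Nat.pow_le_pow_left hA _
          _ = pm ^ ((L+2+d) * EE d r) := by rw [← pow_mul]
      · exact Nat.pow_le_pow_left hpm _
    have h3 : pm ^ ((L+2+d) * EE d r) * pm ^ (d^r) = pm ^ ((L+2+d) * EE d r + d^r) := by
      rw [← pow_add]
    have h4 : (L+2+d) * EE d r + d^r ≤ 4 * (d+1)^r := by
      have := EE_bound d hd1 r hr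
      calc (L+2+d) * EE d r + d^r = EE d r * (d + L + 2) + d^r := by ring
        _ ≤ 4 * (d+1)^r := this
    calc NN d pm r ≤ (2*d*pm^d) ^ (EE d r) * 2 ^ (d^r) := h1
      _ ≤ pm ^ ((L+2+d) * EE d r) * pm ^ (d^r) := h2
      _ = pm ^ ((L+2+d) * EE d r + d^r) := h3
      _ ≤ pm ^ (4 * (d+1)^r) := Nat.pow_le_pow_right (by omega) h4
end Outer

section Main

lemma outer_blocks (r n d : ℕ) (p : Fin r → ℕ) (hp : ∀ i, (p i).Prime) (pm : ℕ)
    (hpm : ∀ i, p i ≤ pm)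
    (f : (i : Fin r) → (Fin n → ZMod (p i)) → AddCircle (1:ℝ))
    (hdeg : ∀ i, IsNCPoly d (f i)) (h0 : ∀ i, f i (fun _ => 0) = 0)
    (hn : NN d pm r ≤ n) :
    ∀ k, k ≤ r → ∃ Bl : Fin (NN d pm (r-k)) → Finset (Fin n),
      (∀ l, (Bl l).Nonempty) ∧ (∀ l l', l ≠ l' → Disjoint (Bl l) (Bl l')) ∧
      ∀ i : Fin r, (i:ℕ) < k → ∀ K : Finset (Fin (NN d pm (r-k))),
        f i (vec (p i) (K.biUnion Bl)) = 0 := by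
  intro k
  induction k with
  | zero =>
    intro _
    refine ⟨fun l => {⟨l.val, lt_of_lt_of_le l.isLt hn⟩}, fun l => Finset.singleton_nonempty _,
      ?_, fun i hi => absurd hi (by omega)⟩
    intro l l' hll
    simp only [Finset.disjoint_singleton_left, Finset.mem_singleton]
    intro heq
    simp only [Fin.mk.injEq] at heq
    exact hll (Fin.ext heq)
  | succ k ih =>
    intro hk1
    obtain ⟨Bl, hne, hdisjB, hvan⟩ := ih (by omega)
    set i0 : Fin r := ⟨k, by omega⟩ with hi0
    haveI : Fact (p i0).Prime := ⟨hp i0⟩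
    have hrw : r - k = (r - (k+1)) + 1 := by omega
    set m := NN d pm (r-(k+1)) with hm
    have hstep : NN d pm (r-k) = m * ((m+1)^(d-1) * (d * pm^d) + 1) := by
      rw [hrw]
      rfl
    have hple : (p i0)^d ≤ pm^d := Nat.pow_le_pow_left (hpm i0) d
    have hu' : m * ((m+1)^(d-1) * (d * (p i0)^d) + 1) ≤ NN d pm (r-k) := by
      rw [hstep]
      gcongr
    obtain ⟨T, hTne, hTdisj, hTvan⟩ :=
      prime_step (f i0) (hdeg i0) (h0 i0) Bl hdisjB hu'
    refine ⟨fun l => (T l).biUnion Bl, ?_, ?_, ?_⟩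
    · intro l
      obtain ⟨j, hj⟩ := hTne l
      obtain ⟨t, ht⟩ := hne j
      exact ⟨t, Finset.mem_biUnion.mpr ⟨j, hj, ht⟩⟩
    · intro l l' hll
      exact biUnion_disjoint_of_disjoint hdisjB (u' := ℕ) (hTdisj l l' hll)
    · intro i hik K
      have hassoc : K.biUnion (fun l => (T l).biUnion Bl) = (K.biUnion T).biUnion Bl :=
        (Finset.biUnion_biUnion K T Bl).symm
      rw [hassoc]
      rcases Nat.lt_succ_iff_lt_or_eq.mp hik with h | h
      · exact hvan i h (K.biUnion T)
      · have hieq : i = i0 := Fin.ext h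
        subst hieq
        exact hTvan K

theorem stmt18' (r n d : ℕ) (hr : 1 ≤ r) (p : Fin r → ℕ)
    (hp : ∀ i, (p i).Prime)
    (pm : ℕ) (hpm : ∀ i, p i ≤ pm) (hpm' : ∃ i, p i = pm)
    (f : (i : Fin r) → (Fin n → ZMod (p i)) → AddCircle (1 : ℝ))
    (hdeg : ∀ i, IsNCPoly d (f i))
    (h0 : ∀ i, f i (fun _ => 0) = 0)
    (hOR : ∀ x : Fin n → Bool, x ≠ (fun _ => false) →
      ∃ i, f i (fun j => if x j then 1 else 0) ≠ 0) :
    (n : ℝ) < 2 ^ (4 * ((d : ℝ) + 1) ^ r * Real.logb 2 pm) := by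
  classical
  have hpm2 : 2 ≤ pm := by
    obtain ⟨i, hieq⟩ := hpm'
    have := (hp i).two_le
    have := hpm i
    omega
  by_cases hn : NN d pm r ≤ n
  · exfalso
    obtain ⟨Bl, hne, _, hvan⟩ := outer_blocks r n d p hp pm hpm f hdeg h0 hn r (le_refl r)
    set l0 : Fin (NN d pm (r-r)) := ⟨0, NN_pos d pm (r-r)⟩ with hl0
    set X := Bl l0 with hX
    obtain ⟨t0, ht0⟩ := hne l0
    set xb : Fin n → Bool := fun t => decide (t ∈ X) with hxbdef
    have hxb : xb ≠ (fun _ => false) := by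
      intro hxx
      have h1 := congrFun hxx t0
      rw [hxbdef] at h1
      simp [ht0] at h1
      exact h1 ht0
    obtain ⟨i, hi⟩ := hOR xb hxb
    apply hi
    have hK := hvan i i.isLt ({l0} : Finset (Fin (NN d pm (r-r))))
    rw [Finset.singleton_biUnion] at hK
    have hvec : (fun j => if xb j then (1 : ZMod (p i)) else 0) = vec (p i) X := by
      funext j
      rw [hxbdef]
      simp [vec]
    rw [hvec]
    exact hK
  · push_neg at hn
    have hle := NN_le_pow d pm r hpm2 hr
    have h1 : (n:ℝ) < ((pm ^ (4 * (d+1)^r) : ℕ) : ℝ) := by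
      have := lt_of_lt_of_le hn hle
      exact_mod_cast this
    have hpmpos : (0:ℝ) < (pm:ℝ) := by
      have : (2:ℝ) ≤ (pm:ℝ) := by exact_mod_cast hpm2
      linarith
    have hpow : ((pm : ℝ)) ^ (4*(d+1)^r : ℕ)
        = (2:ℝ) ^ (Real.logb 2 pm * ((4*(d+1)^r : ℕ) : ℝ)) := by
      rw [Real.rpow_mul (by norm_num : (0:ℝ) ≤ 2)]
      rw [Real.rpow_logb (by norm_num : (0:ℝ) < 2) (by norm_num : (2:ℝ) ≠ 1) hpmpos]
      rw [Real.rpow_natCast]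
    have h2 : ((pm ^ (4 * (d+1)^r) : ℕ) : ℝ) = 2 ^ (4 * ((d:ℝ)+1)^r * Real.logb 2 pm) := by
      push_cast
      push_cast at hpow
      rw [hpow]
      congr 1
      ring
    rw [← h2]
    exact h1
end Main

/-- Lower bound for weak representation of OR by nonclassical polynomials over
distinct prime moduli: if all degrees are at most `d` then
`n < 2^{4(d+1)^r log₂ p}` where `p = max pᵢ`. -/
theorem stmt18 (r n d : ℕ) (hr : 1 ≤ r) (p : Fin r → ℕ)
    (hp : ∀ i, (p i).Prime) (hinj : Function.Injective p)
    (pm : ℕ) (hpm : ∀ i, p i ≤ pm) (hpm' : ∃ i, p i = pm)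
    (f : (i : Fin r) → (Fin n → ZMod (p i)) → AddCircle (1 : ℝ))
    (hdeg : ∀ i, IsNCPoly d (f i))
    (h0 : ∀ i, f i (fun _ => 0) = 0)
    (hOR : ∀ x : Fin n → Bool, x ≠ (fun _ => false) →
      ∃ i, f i (fun j => if x j then 1 else 0) ≠ 0) :
    (n : ℝ) < 2 ^ (4 * ((d : ℝ) + 1) ^ r * Real.logb 2 pm) :=
  stmt18' r n d hr p hp pm hpm hpm' f hdeg h0 hOR
end

section
/- Let m = p₁⋯p_r be a product of r pairwise distinct primes. There exists a symmetric polynomial P ∈ (ZMod m)[x₁,…,x_n] of total degree at most 2⌈n^{1/r}⌉ such that P(0,…,0) = 0 and P(x) ≠ 0 in ZMod m for every nonzero x ∈ {0,1}^n. -/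
open Finset

namespace Stmt19Aux
open MvPolynomial

lemma geom' (p k : ℕ) (hp : 1 ≤ p) : (p - 1) * ∑ j ∈ Finset.range k, p ^ j = p ^ k - 1 := by
  induction k with
  | zero => simp
  | succ k ih =>
      rw [Finset.sum_range_succ, Nat.mul_add, ih]
      have h1 : 1 ≤ p ^ k := Nat.one_le_pow _ _ hp
      have h2 : p ^ (k+1) = p * p ^ k := pow_succ' p k
      have h3 : (p - 1) * p ^ k = p * p ^ k - p ^ k := Nat.sub_one_mul p (p ^ k)
      have h4 : p ^ k ≤ p * p ^ k := Nat.le_mul_of_pos_left _ (by omega)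
      omega

lemma totalDegree_X_le' {σ R : Type*} [CommSemiring R] (i : σ) :
    (X i : MvPolynomial σ R).totalDegree ≤ 1 := by
  have h : (X i : MvPolynomial σ R) = monomial (Finsupp.single i 1) 1 := by
    rw [← X_pow_eq_monomial, pow_one]
  rw [h]
  refine (totalDegree_monomial_le _ _).trans ?_
  simp

lemma totalDegree_esymm_le (σ : Type*) (R : Type*) [CommSemiring R] [Fintype σ] (k : ℕ) :
    (esymm σ R k).totalDegree ≤ k := by
  unfold esymm
  refine (totalDegree_finset_sum _ _).trans ?_
  apply Finset.sup_le
  intro t ht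
  refine (totalDegree_finset_prod _ _).trans ?_
  calc ∑ i ∈ t, (X i : MvPolynomial σ R).totalDegree ≤ ∑ _i ∈ t, 1 :=
        Finset.sum_le_sum fun i _ => totalDegree_X_le' i
    _ = t.card := by simp
    _ = k := (Finset.mem_powersetCard.mp ht).2

lemma eval_esymm_bool {R : Type*} [CommSemiring R] {n : ℕ} (x : Fin n → Bool) (k : ℕ) :
    MvPolynomial.eval (fun j => if x j then (1:R) else 0) (esymm (Fin n) R k)
      = ((Finset.univ.filter (fun j => x j = true)).card.choose k : R) := by
  classical
  set A := Finset.univ.filter (fun j => x j = true) with hA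
  unfold esymm
  rw [map_sum]
  have key : ∀ t ∈ Finset.univ.powersetCard k,
      MvPolynomial.eval (fun j => if x j then (1:R) else 0) (∏ i ∈ t, X i)
        = if t ⊆ A then (1:R) else 0 := by
    intro t _
    rw [map_prod]
    by_cases h : t ⊆ A
    · rw [if_pos h]
      apply Finset.prod_eq_one
      intro i hi
      have : x i = true := (Finset.mem_filter.mp (h hi)).2
      simp [this]
    · rw [if_neg h]
      obtain ⟨i, hit, hiA⟩ := Finset.not_subset.mp h
      apply Finset.prod_eq_zero hit
      have : ¬ x i = true := fun hx => hiA (Finset.mem_filter.mpr ⟨Finset.mem_univ _, hx⟩)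
      simp [this]
  rw [Finset.sum_congr rfl key, Finset.sum_boole]
  have : Finset.filter (· ⊆ A) (Finset.univ.powersetCard k) = A.powersetCard k := by
    ext t
    simp only [Finset.mem_filter, Finset.mem_powersetCard]
    constructor
    · rintro ⟨⟨-, hc⟩, hs⟩; exact ⟨hs, hc⟩
    · rintro ⟨hs, hc⟩; exact ⟨⟨Finset.subset_univ _, hc⟩, hs⟩
  rw [this, Finset.card_powersetCard]

lemma lucas_digit (P : ℕ) [Fact P.Prime] (w j : ℕ) :
    ((w.choose (P ^ j) : ℕ) : ZMod P) = ((w / P ^ j % P : ℕ) : ZMod P) := by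
  induction j generalizing w with
  | zero => simp [Nat.choose_one_right, ZMod.natCast_mod]
  | succ j ih =>
      have h := (ZMod.natCast_eq_natCast_iff _ _ _).mpr
        (Choose.choose_modEq_choose_mod_mul_choose_div_nat (p := P) (n := w) (k := P ^ (j+1)))
      rw [h]
      have hp2 : 2 ≤ P := (Fact.out : P.Prime).two_le
      have h1 : P ^ (j+1) % P = 0 := by simp [pow_succ, Nat.mul_mod_left]
      have h2 : P ^ (j+1) / P = P ^ j := by
        rw [pow_succ, Nat.mul_div_cancel _ (by omega)]
      rw [h1, h2, Nat.choose_zero_right, one_mul, ih]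
      rw [Nat.div_div_eq_div_mul, ← pow_succ']

lemma exists_digit {P ee w : ℕ} (hp : 2 ≤ P) (h : ¬ P ^ ee ∣ w) :
    ∃ j < ee, w / P ^ j % P ≠ 0 := by
  induction ee with
  | zero => simp at h
  | succ ee ih =>
      by_cases he : P ^ ee ∣ w
      · refine ⟨ee, by omega, ?_⟩
        intro hd
        apply h
        obtain ⟨q, rfl⟩ := he
        rw [Nat.mul_div_cancel_left _ (Nat.pow_pos (by omega) : 0 < P ^ ee)] at hd
        exact pow_succ P ee ▸ mul_dvd_mul_left (P ^ ee) (Nat.dvd_of_mod_eq_zero hd)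
      · obtain ⟨j, hj, hd⟩ := ih he
        exact ⟨j, by omega, hd⟩

lemma exists_aniso (P : ℕ) [Fact P.Prime] : ∃ c : ZMod P, ∀ a : ZMod P, a ^ 2 + a + c ≠ 0 := by
  have hni : ¬ Function.Injective (fun a : ZMod P => a ^ 2 + a) := by
    intro hinj
    have h0 : (fun a : ZMod P => a ^ 2 + a) 0 = 0 := by norm_num
    have h1 : (fun a : ZMod P => a ^ 2 + a) (-1) = 0 := by norm_num
    exact (neg_ne_zero.mpr (one_ne_zero : (1 : ZMod P) ≠ 0)) (hinj (h0.trans h1.symm)).symm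
  have hns : ¬ Function.Surjective (fun a : ZMod P => a ^ 2 + a) := fun hs =>
    hni (Finite.injective_iff_surjective.mpr hs)
  unfold Function.Surjective at hns
  push_neg at hns
  obtain ⟨b, hb⟩ := hns
  refine ⟨-b, fun a ha => hb a ?_⟩
  linear_combination ha

lemma aniso_zero {P : ℕ} [Fact P.Prime] {c z1 z2 : ZMod P} (hc : ∀ a : ZMod P, a ^ 2 + a + c ≠ 0)
    (h : z1 ^ 2 + z1 * z2 + c * z2 ^ 2 = 0) : z1 = 0 ∧ z2 = 0 := by
  by_cases h2 : z2 = 0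
  · subst h2
    refine ⟨?_, rfl⟩
    have : z1 ^ 2 = 0 := by linear_combination h
    exact pow_eq_zero_iff (n := 2) (by norm_num) |>.mp this
  · exfalso
    apply hc (z1 * z2⁻¹)
    have hz : z2 * z2⁻¹ = 1 := mul_inv_cancel₀ h2
    linear_combination z2⁻¹^2 * h - z1*z2⁻¹ * hz - c*(z2*z2⁻¹+1)*hz

noncomputable def z1v (R : Type*) [CommRing R] (pp ee w : ℕ) : R :=
  1 - ∏ j ∈ Finset.range (ee - 1), (1 - ((w.choose (pp ^ j) : ℕ) : R) ^ (pp - 1))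

noncomputable def z2v (R : Type*) [CommRing R] (pp ee w : ℕ) : R :=
  ((w.choose (pp ^ (ee - 1)) : ℕ) : R)

noncomputable def qv (R : Type*) [CommRing R] (pp ee : ℕ) (cc : R) (w : ℕ) : R :=
  z1v R pp ee w ^ 2 + z1v R pp ee w * z2v R pp ee w + cc * z2v R pp ee w ^ 2

lemma map_qv {R S : Type*} [CommRing R] [CommRing S] (f : R →+* S) (pp ee : ℕ) (cc : R) (w : ℕ) :
    f (qv R pp ee cc w) = qv S pp ee (f cc) w := by
  simp [qv, z1v, z2v, map_add, map_mul, map_pow, map_sub, map_one, map_prod, map_natCast]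

lemma qv_zero (R : Type*) [CommRing R] {pp : ℕ} (hpp : 2 ≤ pp) (ee : ℕ) (cc : R) :
    qv R pp ee cc 0 = 0 := by
  have hz : ∀ k : ℕ, 1 ≤ k → ((Nat.choose 0 k : ℕ) : R) = 0 := by
    intro k hk
    rw [Nat.choose_eq_zero_of_lt (by omega)]
    simp
  have h1 : z1v R pp ee 0 = 0 := by
    unfold z1v
    rw [Finset.prod_congr rfl (fun j _ => ?_), Finset.prod_const_one, sub_self]
    rw [hz _ (Nat.one_le_pow _ _ (by omega)), zero_pow (by omega : pp - 1 ≠ 0), sub_zero]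
  have h2 : z2v R pp ee 0 = 0 := by
    unfold z2v; exact hz _ (Nat.one_le_pow _ _ (by omega))
  simp [qv, h1, h2]

lemma digit_cast_ne_zero {P : ℕ} [Fact P.Prime] {a : ℕ} (h : a % P ≠ 0) :
    ((a % P : ℕ) : ZMod P) ≠ 0 := by
  intro hc
  rw [ZMod.natCast_eq_zero_iff] at hc
  have hlt : a % P < P := Nat.mod_lt _ (Fact.out : P.Prime).pos
  have := Nat.le_of_dvd (by omega) hc
  omega

lemma qv_ne_zero {P : ℕ} [Fact P.Prime] {ee w : ℕ} {cc : ZMod P}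
    (hc : ∀ a : ZMod P, a ^ 2 + a + cc ≠ 0) (hw : ¬ P ^ ee ∣ w) :
    qv (ZMod P) P ee cc w ≠ 0 := by
  have hp2 : 2 ≤ P := (Fact.out : P.Prime).two_le
  intro h0
  obtain ⟨hz1, hz2⟩ := aniso_zero hc h0
  obtain ⟨j, hj, hdig⟩ := exists_digit hp2 hw
  by_cases hje : j = ee - 1
  · apply digit_cast_ne_zero (P := P) (a := w / P ^ (ee - 1)) (by rw [← hje]; exact hdig)
    rw [← lucas_digit]
    exact hz2
  · have hjlt : j < ee - 1 := by omega
    have hfac : (1 - ((w.choose (P ^ j) : ℕ) : ZMod P) ^ (P - 1)) = 0 := by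
      rw [lucas_digit]
      rw [ZMod.pow_card_sub_one_eq_one (digit_cast_ne_zero hdig), sub_self]
    have hprod : ∏ jj ∈ Finset.range (ee - 1),
        (1 - ((w.choose (P ^ jj) : ℕ) : ZMod P) ^ (P - 1)) = 0 :=
      Finset.prod_eq_zero (Finset.mem_range.mpr hjlt) hfac
    have : z1v (ZMod P) P ee w = 1 := by rw [z1v, hprod, sub_zero]
    rw [this] at hz1
    exact one_ne_zero hz1

noncomputable def Z1 (n m pp ee : ℕ) : MvPolynomial (Fin n) (ZMod m) :=
  1 - ∏ j ∈ Finset.range (ee - 1), (1 - (esymm (Fin n) (ZMod m) (pp ^ j)) ^ (pp - 1))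

noncomputable def Z2 (n m pp ee : ℕ) : MvPolynomial (Fin n) (ZMod m) :=
  esymm (Fin n) (ZMod m) (pp ^ (ee - 1))

noncomputable def Qp (n m pp ee : ℕ) (cc : ZMod m) : MvPolynomial (Fin n) (ZMod m) :=
  Z1 n m pp ee ^ 2 + Z1 n m pp ee * Z2 n m pp ee + C cc * Z2 n m pp ee ^ 2

lemma rename_Qp (n m pp ee : ℕ) (cc : ZMod m) (σ : Equiv.Perm (Fin n)) :
    rename σ (Qp n m pp ee cc) = Qp n m pp ee cc := by
  simp [Qp, Z1, Z2, map_add, map_sub, map_mul, map_pow, map_one, map_prod, rename_C,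
    rename_esymm]

lemma totalDegree_Qp_le {n m pp ee dd : ℕ} (hpp : 2 ≤ pp) (hle : pp ^ (ee - 1) ≤ dd)
    (cc : ZMod m) : (Qp n m pp ee cc).totalDegree ≤ 2 * dd := by
  have hZ1 : (Z1 n m pp ee).totalDegree ≤ dd := by
    refine (totalDegree_sub _ _).trans ?_
    rw [totalDegree_one]
    refine max_le (by omega) ?_
    refine (totalDegree_finset_prod _ _).trans ?_
    calc ∑ j ∈ Finset.range (ee - 1),
          (1 - (esymm (Fin n) (ZMod m) (pp ^ j)) ^ (pp - 1)).totalDegree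
        ≤ ∑ j ∈ Finset.range (ee - 1), (pp - 1) * pp ^ j := by
          refine Finset.sum_le_sum fun j _ => ?_
          refine (totalDegree_sub _ _).trans ?_
          rw [totalDegree_one]
          refine max_le (by omega) ?_
          refine (totalDegree_pow _ _).trans ?_
          exact Nat.mul_le_mul_left _ (totalDegree_esymm_le _ _ _)
      _ = (pp - 1) * ∑ j ∈ Finset.range (ee - 1), pp ^ j := (Finset.mul_sum _ _ _).symm
      _ = pp ^ (ee - 1) - 1 := geom' pp (ee - 1) (by omega)
      _ ≤ dd := by omega
  have hZ2 : (Z2 n m pp ee).totalDegree ≤ dd := (totalDegree_esymm_le _ _ _).trans hle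
  refine (totalDegree_add _ _).trans (max_le ((totalDegree_add _ _).trans (max_le ?_ ?_)) ?_)
  · exact (totalDegree_pow _ _).trans (by omega)
  · exact (totalDegree_mul _ _).trans (by omega)
  · refine (totalDegree_mul _ _).trans ?_
    rw [totalDegree_C]
    exact (by have := (totalDegree_pow (Z2 n m pp ee) 2); omega)

lemma eval_Qp (n m pp ee : ℕ) (cc : ZMod m) (x : Fin n → Bool) :
    MvPolynomial.eval (fun j => if x j then (1 : ZMod m) else 0) (Qp n m pp ee cc)
      = qv (ZMod m) pp ee cc (Finset.univ.filter (fun j => x j = true)).card := by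
  simp only [Qp, Z1, Z2, qv, z1v, z2v, map_add, map_mul, map_pow, map_sub, map_one,
    map_prod, eval_C, eval_esymm_bool]

lemma nat_prod_dvd {ι : Type*} [DecidableEq ι] (s : Finset ι) (f : ι → ℕ) (w : ℕ)
    (hco : ∀ a ∈ s, ∀ b ∈ s, a ≠ b → Nat.Coprime (f a) (f b))
    (hdvd : ∀ i ∈ s, f i ∣ w) : (∏ i ∈ s, f i) ∣ w := by
  classical
  induction s using Finset.induction_on with
  | empty => simp
  | @insert a t ha ih =>
      rw [Finset.prod_insert ha]
      have hcop : Nat.Coprime (f a) (∏ i ∈ t, f i) :=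
        Nat.Coprime.prod_right fun i hi =>
          hco a (Finset.mem_insert_self a t) i (Finset.mem_insert_of_mem hi)
            (fun h => ha (h ▸ hi))
      exact Nat.Coprime.mul_dvd_of_dvd_of_dvd hcop (hdvd a (Finset.mem_insert_self a t))
        (ih (fun x hx y hy hxy => hco x (Finset.mem_insert_of_mem hx) y
          (Finset.mem_insert_of_mem hy) hxy) (fun i hi => hdvd i (Finset.mem_insert_of_mem hi)))

end Stmt19Aux

open Stmt19Aux MvPolynomial in
/-- There is a symmetric polynomial of degree at most `2⌈n^{1/r}⌉` over
`ZMod m`, `m` a product of `r` distinct primes, weakly representing OR. -/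
theorem stmt19 (r n : ℕ) (hr : 1 ≤ r) (p : Fin r → ℕ)
    (hp : ∀ i, (p i).Prime) (hinj : Function.Injective p)
    (m : ℕ) (hm : m = ∏ i, p i) :
    ∃ P : MvPolynomial (Fin n) (ZMod m),
      (∀ σ : Equiv.Perm (Fin n), MvPolynomial.rename σ P = P) ∧
      P.totalDegree ≤ 2 * ⌈(n : ℝ) ^ ((1 : ℝ) / r)⌉₊ ∧
      MvPolynomial.eval (0 : Fin n → ZMod m) P = 0 ∧
      ∀ x : Fin n → Bool, x ≠ (fun _ => false) →
        MvPolynomial.eval (fun j => if x j then (1 : ZMod m) else 0) P ≠ 0 := by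
  classical
  by_cases hn : n = 0
  · subst hn
    exact ⟨0, fun σ => by simp, by simp, by simp,
      fun x hx => absurd (funext fun j => j.elim0) hx⟩
  set d := ⌈(n : ℝ) ^ ((1 : ℝ) / r)⌉₊ with hdd
  have hrne : (r : ℝ) ≠ 0 := Nat.cast_ne_zero.mpr (by omega)
  have hnpos : (1:ℝ) ≤ (n:ℝ) := by exact_mod_cast Nat.one_le_iff_ne_zero.mpr hn
  have ht1 : (1:ℝ) ≤ (n : ℝ) ^ ((1:ℝ)/r) := by
    calc (1:ℝ) = (1:ℝ) ^ ((1:ℝ)/(r:ℝ)) := (Real.one_rpow _).symm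
      _ ≤ _ := Real.rpow_le_rpow zero_le_one hnpos (by positivity)
  have hd1 : 1 ≤ d := Nat.one_le_ceil_iff.mpr (by linarith)
  have hnd : n ≤ d ^ r := by
    have h1 : (n:ℝ) ^ ((1:ℝ)/r) ≤ (d:ℝ) := Nat.le_ceil _
    have h2 : ((n:ℝ) ^ ((1:ℝ)/r)) ^ (r:ℕ) ≤ (d:ℝ) ^ (r:ℕ) :=
      pow_le_pow_left₀ (by positivity) h1 r
    have h3 : ((n:ℝ) ^ ((1:ℝ)/r)) ^ (r:ℕ) = (n:ℝ) := by
      rw [← Real.rpow_natCast ((n:ℝ) ^ ((1:ℝ)/(r:ℝ))) r, ← Real.rpow_mul (by positivity),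
        one_div, inv_mul_cancel₀ hrne, Real.rpow_one]
    rw [h3] at h2
    exact_mod_cast h2
  have fp : ∀ i, Fact (p i).Prime := fun i => ⟨hp i⟩
  have hex : ∀ i, ∃ t, d < p i ^ t := fun i => ⟨d, Nat.lt_pow_self (hp i).one_lt⟩
  set e : Fin r → ℕ := fun i => Nat.find (hex i) with he
  have hespec : ∀ i, d < p i ^ e i := fun i => Nat.find_spec (hex i)
  have hemin : ∀ i, p i ^ (e i - 1) ≤ d := by
    intro i
    rcases Nat.eq_zero_or_pos (e i) with h0 | h0
    · rw [h0]; simpa using hd1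
    · have h : e i - 1 < e i := by omega
      exact not_lt.mp (Nat.find_min (hex i) h)
  choose c hc using fun i => @exists_aniso (p i) (fp i)
  set u : Fin r → ℕ := fun i => ∏ j ∈ Finset.univ.erase i, p j with hu
  refine ⟨∑ i, C ((u i : ZMod m)) * Qp n m (p i) (e i) (((c i).val : ZMod m)),
    ?_, ?_, ?_, ?_⟩
  · intro σ
    rw [map_sum]
    exact Finset.sum_congr rfl fun i _ => by rw [map_mul, rename_C, rename_Qp]
  · refine (totalDegree_finset_sum _ _).trans ?_
    apply Finset.sup_le
    intro i _
    refine (totalDegree_mul _ _).trans ?_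
    rw [totalDegree_C]
    simpa using totalDegree_Qp_le (hp i).two_le (hemin i) _
  · have h0 : (0 : Fin n → ZMod m)
        = fun j => if (fun _ : Fin n => false) j then (1 : ZMod m) else 0 := by
      funext j; simp
    rw [h0, map_sum]
    refine Finset.sum_eq_zero fun i _ => ?_
    rw [map_mul, eval_C, eval_Qp]
    have hcard : (Finset.univ.filter
        (fun j : Fin n => (fun _ : Fin n => false) j = true)).card = 0 := by simp
    rw [hcard, qv_zero _ (hp i).two_le, mul_zero]
  · intro x hx
    set w := (Finset.univ.filter (fun j => x j = true)).card with hw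
    have hw1 : 1 ≤ w := by
      rcases Nat.eq_zero_or_pos w with h0 | h; swap
      · exact h
      exfalso; apply hx; funext j
      have hemp : Finset.univ.filter (fun j => x j = true) = ∅ := Finset.card_eq_zero.mp h0
      cases hxj : x j
      · rfl
      · exact absurd hxj (Finset.filter_eq_empty_iff.mp hemp (Finset.mem_univ j))
    have hwn : w ≤ n := by
      have := Finset.card_filter_le Finset.univ (fun j : Fin n => x j = true)
      simpa using this
    have hex_i : ∃ i, ¬ p i ^ e i ∣ w := by
      by_contra hall
      push_neg at hall
      have hdvd : (∏ i, p i ^ e i) ∣ w := by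
        refine nat_prod_dvd _ _ _ ?_ (fun i _ => hall i)
        intro a _ b _ hab
        exact Nat.Coprime.pow _ _ ((Nat.coprime_primes (hp a) (hp b)).mpr
          (fun h => hab (hinj h)))
      have hbig : n < ∏ i, p i ^ e i := by
        calc n ≤ d ^ r := hnd
          _ < (d+1) ^ r := Nat.pow_lt_pow_left (by omega) (by omega)
          _ = ∏ _i : Fin r, (d+1) := by
              rw [Finset.prod_const, Finset.card_univ, Fintype.card_fin]
          _ ≤ ∏ i, p i ^ e i :=
              Finset.prod_le_prod' (fun i _ => by have := hespec i; omega)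
      have := Nat.le_of_dvd (by omega) hdvd
      omega
    obtain ⟨i, hi⟩ := hex_i
    haveI := fp i
    have hpidvd : p i ∣ m := hm ▸ Finset.dvd_prod_of_mem p (Finset.mem_univ i)
    intro heval0
    set φ := ZMod.castHom hpidvd (ZMod (p i)) with hφ
    have h1 : φ (MvPolynomial.eval (fun j => if x j then (1 : ZMod m) else 0)
        (∑ i, C ((u i : ZMod m)) * Qp n m (p i) (e i) (((c i).val : ZMod m)))) = 0 := by
      rw [heval0, map_zero]
    have h2 : φ (MvPolynomial.eval (fun j => if x j then (1 : ZMod m) else 0)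
        (∑ i, C ((u i : ZMod m)) * Qp n m (p i) (e i) (((c i).val : ZMod m))))
        = ∑ jj, ((u jj : ℕ) : ZMod (p i)) * qv (ZMod (p i)) (p jj) (e jj)
            (((c jj).val : ZMod (p i))) w := by
      rw [map_sum, map_sum]
      refine Finset.sum_congr rfl fun jj _ => ?_
      rw [map_mul, map_mul, eval_C, eval_Qp, map_qv, map_natCast, map_natCast, ← hw]
    rw [h2] at h1
    have hzero : ∀ jj ∈ Finset.univ, jj ≠ i → ((u jj : ℕ) : ZMod (p i)) *
        qv (ZMod (p i)) (p jj) (e jj) (((c jj).val : ZMod (p i))) w = 0 := by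
      intro jj _ hji
      have : ((u jj : ℕ) : ZMod (p i)) = 0 := by
        rw [ZMod.natCast_eq_zero_iff]
        exact Finset.dvd_prod_of_mem p (Finset.mem_erase.mpr ⟨hji.symm, Finset.mem_univ i⟩)
      rw [this, zero_mul]
    rw [Finset.sum_eq_single_of_mem i (Finset.mem_univ i) hzero] at h1
    have hune : ((u i : ℕ) : ZMod (p i)) ≠ 0 := by
      rw [Ne, ZMod.natCast_eq_zero_iff]
      intro hdvd
      obtain ⟨k, hk, hpk⟩ := ((Nat.Prime.prime (hp i)).dvd_finset_prod_iff p).mp hdvd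
      have : p i = p k := ((Nat.prime_dvd_prime_iff_eq (hp i) (hp k)).mp hpk)
      exact (Finset.mem_erase.mp hk).1 (hinj this).symm
    have hcval : (((c i).val : ZMod (p i))) = c i := ZMod.natCast_rightInverse (c i)
    rw [hcval] at h1
    rcases mul_eq_zero.mp h1 with h | h
    · exact hune h
    · exact qv_ne_zero (hc i) hi h
end
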